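/- arXiv:1011.0827 — 3 statements merged into one kernel-verified Lean document; each statement's English description precedes it below -/
import Mathlib

section
/- For G(2^m, 2) with m ≥ 1, ⌊m/2⌋ ≤ rc(G(2^m,2)) ≤ src(G(2^m,2)) ≤ ⌈m/2⌉; in particular if m is even then rc(G(2^m,2)) = src(G(2^m,2)) = m/2. -/
open SimpleGraph Finset

/-- An edge-coloring with colors `< k` such that every two vertices are joined by a
path whose edge colors are pairwise distinct. -/
def RainbowConnected {V : Type*} (G : SimpleGraph V) (k : ℕ) : Prop :=
  ∃ c : Sym2 V → ℕ, (∀ e ∈ G.edgeSet, c e < k) ∧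
    ∀ u v : V, ∃ p : G.Walk u v, p.IsPath ∧ (p.edges.map c).Nodup

/-- As above, but the rainbow path must be a geodesic. -/
def StrongRainbowConnected {V : Type*} (G : SimpleGraph V) (k : ℕ) : Prop :=
  ∃ c : Sym2 V → ℕ, (∀ e ∈ G.edgeSet, c e < k) ∧
    ∀ u v : V, ∃ p : G.Walk u v, p.IsPath ∧ p.length = G.dist u v ∧ (p.edges.map c).Nodup

/-- The rainbow connection number. -/
noncomputable def rc {V : Type*} (G : SimpleGraph V) : ℕ := sInf {k | RainbowConnected G k}

/-- The strong rainbow connection number. -/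
noncomputable def src {V : Type*} (G : SimpleGraph V) : ℕ := sInf {k | StrongRainbowConnected G k}
/-- The recursive circulant `G(N,d)`: the circulant graph on `ZMod N` with jumps
`±d^i` for `0 ≤ i ≤ ⌈log_d N⌉ - 1`. -/
def recCirc (N d : ℕ) : SimpleGraph (ZMod N) :=
  SimpleGraph.circulantGraph {x : ZMod N | ∃ i < Nat.clog d N, x = (d : ZMod N) ^ i}

/-- The value of a step: `(j, true)` is `+d^j` and `(j, false)` is `-d^j`. -/
def stepVal (N d : ℕ) (p : ℕ × Bool) : ZMod N :=
  if p.2 then (d : ZMod N) ^ p.1 else -((d : ZMod N) ^ p.1)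

namespace RCaux

def istep (p : ℕ × Bool) : ℤ := if p.2 then 2 ^ p.1 else -(2 ^ p.1)

def isum (L : List (ℕ × Bool)) : ℤ := (L.map istep).sum

def up (p : ℕ × Bool) : ℕ × Bool := (p.1 + 1, p.2)

@[simp] lemma isum_nil : isum [] = 0 := rfl
@[simp] lemma isum_cons (p : ℕ × Bool) (L : List (ℕ × Bool)) :
    isum (p :: L) = istep p + isum L := by simp [isum]

lemma isum_append (L M : List (ℕ × Bool)) : isum (L ++ M) = isum L + isum M := by
  simp [isum]

lemma istep_up (p : ℕ × Bool) : istep (up p) = 2 * istep p := by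
  rcases p with ⟨i, b⟩
  cases b <;> simp [istep, up, pow_succ] <;> ring

lemma isum_up (L : List (ℕ × Bool)) : isum (L.map up) = 2 * isum L := by
  induction L with
  | nil => simp
  | cons p L ih => simp [ih, istep_up]; ring

def naf : ℕ → ℤ → List (ℕ × Bool)
  | 0, _ => []
  | m+1, x =>
    if x % 2 = 0 then (naf m (x/2)).map up
    else (0, decide (x % 4 = 1)) ::
      (naf m ((x - (if x % 4 = 1 then (1:ℤ) else -1))/2)).map up

def W (m : ℕ) (x : ℤ) : ℕ := (naf m x).length

lemma W_zero_m (x : ℤ) : W 0 x = 0 := rfl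

lemma naf_even {m : ℕ} {x : ℤ} (h : x % 2 = 0) :
    naf (m+1) x = (naf m (x/2)).map up := by simp [naf, h]

lemma naf_odd1 {m : ℕ} {x : ℤ} (h : x % 4 = 1) :
    naf (m+1) x = (0, true) :: (naf m ((x - 1)/2)).map up := by
  have h2 : ¬ (x % 2 = 0) := by omega
  simp [naf, h, h2]

lemma naf_odd3 {m : ℕ} {x : ℤ} (h : x % 4 = 3) :
    naf (m+1) x = (0, false) :: (naf m ((x + 1)/2)).map up := by
  have h2 : ¬ (x % 2 = 0) := by omega
  have h1 : ¬ (x % 4 = 1) := by omega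
  have : x - (-1) = x + 1 := by ring
  simp [naf, h1, h2, this]

lemma W_even {m : ℕ} {x : ℤ} (h : x % 2 = 0) : W (m+1) x = W m (x/2) := by
  simp [W, naf_even h]

lemma W_odd1 {m : ℕ} {x : ℤ} (h : x % 4 = 1) : W (m+1) x = W m ((x-1)/2) + 1 := by
  simp [W, naf_odd1 h]

lemma W_odd3 {m : ℕ} {x : ℤ} (h : x % 4 = 3) : W (m+1) x = W m ((x+1)/2) + 1 := by
  simp [W, naf_odd3 h]

lemma W_zero (m : ℕ) : W m 0 = 0 := by
  induction m with
  | zero => rfl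
  | succ m ih => rw [W_even (by norm_num)]; simpa using ih

lemma naf_exp_lt : ∀ (m : ℕ) (x : ℤ), ∀ p ∈ naf m x, p.1 < m := by
  intro m
  induction m with
  | zero => intro x p hp; simp [naf] at hp
  | succ m ih =>
    intro x p hp
    by_cases h : x % 2 = 0
    · rw [naf_even h] at hp
      obtain ⟨q, hq, rfl⟩ := List.mem_map.1 hp
      have := ih _ _ hq; simp [up]; omega
    · have h4 : x % 4 = 1 ∨ x % 4 = 3 := by omega
      rcases h4 with h4 | h4
      · rw [naf_odd1 h4, List.mem_cons] at hp
        rcases hp with hp | hp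
        · simp_all
        · obtain ⟨q, hq, rfl⟩ := List.mem_map.1 hp
          have := ih _ _ hq; simp only [up]; omega
      · rw [naf_odd3 h4, List.mem_cons] at hp
        rcases hp with hp | hp
        · simp_all
        · obtain ⟨q, hq, rfl⟩ := List.mem_map.1 hp
          have := ih _ _ hq; simp only [up]; omega

lemma naf_dvd : ∀ (m : ℕ) (x : ℤ), (2^m : ℤ) ∣ x - isum (naf m x) := by
  intro m
  induction m with
  | zero => intro x; simp [naf]
  | succ m ih =>
    intro x
    by_cases h : x % 2 = 0
    · rw [naf_even h, isum_up]
      obtain ⟨k, hk⟩ := ih (x/2)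
      refine ⟨k, ?_⟩
      have : x = 2 * (x/2) := by omega
      rw [pow_succ]
      nlinarith [hk]
    · have h4 : x % 4 = 1 ∨ x % 4 = 3 := by omega
      rcases h4 with h4 | h4
      · rw [naf_odd1 h4, isum_cons, isum_up]
        obtain ⟨k, hk⟩ := ih ((x-1)/2)
        refine ⟨k, ?_⟩
        have hx : x - 1 = 2 * ((x-1)/2) := by omega
        have : istep (0, true) = 1 := by simp [istep]
        rw [this, pow_succ]
        nlinarith [hk]
      · rw [naf_odd3 h4, isum_cons, isum_up]
        obtain ⟨k, hk⟩ := ih ((x+1)/2)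
        refine ⟨k, ?_⟩
        have hx : x + 1 = 2 * ((x+1)/2) := by omega
        have : istep (0, false) = -1 := by simp [istep]
        rw [this, pow_succ]
        nlinarith [hk]

lemma naf_exp_pos : ∀ (m : ℕ) (x : ℤ), x % 2 = 0 → ∀ p ∈ naf m x, 1 ≤ p.1 := by
  intro m x h p hp
  cases m with
  | zero => simp [naf] at hp
  | succ m =>
    rw [naf_even h] at hp
    obtain ⟨q, hq, rfl⟩ := List.mem_map.1 hp
    simp [up]

lemma naf_pairwise : ∀ (m : ℕ) (x : ℤ), (naf m x).Pairwise (fun p q => p.1 + 2 ≤ q.1) := by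
  intro m
  induction m with
  | zero => intro x; simp [naf]
  | succ m ih =>
    intro x
    by_cases h : x % 2 = 0
    · rw [naf_even h]
      exact (ih _).map up (fun p q hpq => by simp [up]; omega)
    · have h4 : x % 4 = 1 ∨ x % 4 = 3 := by omega
      have key : ∀ (d : ℤ) (b : Bool), (x - d) % 4 = 0 →
          ((0, b) :: (naf m ((x - d)/2)).map up).Pairwise (fun p q => p.1 + 2 ≤ q.1) := by
        intro d b hd
        refine List.Pairwise.cons ?_ ((ih _).map up (fun p q hpq => by simp [up]; omega))
        intro q hq
        obtain ⟨q', hq', rfl⟩ := List.mem_map.1 hq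
        have : 1 ≤ q'.1 := naf_exp_pos m ((x-d)/2) (by omega) q' hq'
        simp [up]; omega
      rcases h4 with h4 | h4
      · rw [naf_odd1 h4]
        exact key 1 true (by omega)
      · rw [naf_odd3 h4]
        have := key (-1) false (by omega)
        have e : x - (-1) = x + 1 := by ring
        rw [e] at this
        exact this


lemma W_one_odd {x : ℤ} (h : x % 2 = 1) : W 1 x = 1 := by
  have h4 : x % 4 = 1 ∨ x % 4 = 3 := by omega
  rcases h4 with h4 | h4
  · rw [W_odd1 h4, W_zero_m]
  · rw [W_odd3 h4, W_zero_m]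

lemma W_mod : ∀ (m : ℕ) (x y : ℤ), (2^m : ℤ) ∣ x - y → W m x = W m y := by
  intro m
  induction m with
  | zero => intro x y _; rfl
  | succ m ih =>
    intro x y hdvd
    obtain ⟨k, hk⟩ := hdvd
    rw [pow_succ] at hk
    have hk2 : x - y = 2 * (2^m * k) := by linarith
    set s : ℤ := 2^m * k with hs
    by_cases hx : x % 2 = 0
    · rw [W_even hx, W_even (x := y) (by omega)]
      apply ih
      refine ⟨k, ?_⟩
      have h3 : x/2 - y/2 = s := by omega
      rw [hs] at h3; linarith
    · cases m with
      | zero =>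
        rw [W_one_odd (by omega), W_one_odd (x := y) (by omega)]
      | succ mm =>
        have hk4 : x - y = 4 * (2^mm * k) := by
          rw [pow_succ] at hk; linarith
        set s2 : ℤ := 2^mm * k with hs2
        have h4 : x % 4 = y % 4 := by omega
        have hx4 : x % 4 = 1 ∨ x % 4 = 3 := by omega
        have hdd : ∀ z w : ℤ, z - w = 2 * s2 → (2:ℤ)^(mm+1) ∣ z - w := by
          intro z w hzw
          refine ⟨k, ?_⟩
          have e : (2:ℤ)^(mm+1) * k = 2 * s2 := by rw [hs2, pow_succ]; ring
          linarith
        rcases hx4 with hx4 | hx4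
        · rw [W_odd1 hx4, W_odd1 (x := y) (by omega)]
          rw [ih ((x-1)/2) ((y-1)/2) (hdd _ _ (by omega))]
        · rw [W_odd3 hx4, W_odd3 (x := y) (by omega)]
          rw [ih ((x+1)/2) ((y+1)/2) (hdd _ _ (by omega))]

lemma Lnbr : ∀ (m : ℕ) (z : ℤ),
    (z % 2 = 1 → W m (z+1) ≤ W m z ∧ W m (z-1) ≤ W m z) ∧
    (z % 2 = 0 → W m (z+1) ≤ W m z + 1 ∧ W m (z-1) ≤ W m z + 1) := by
  intro m
  induction m with
  | zero => intro z; constructor <;> intro _ <;> constructor <;> simp [W_zero_m]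
  | succ m ih =>
    intro z
    have h4 : z % 4 = 0 ∨ z % 4 = 1 ∨ z % 4 = 2 ∨ z % 4 = 3 := by omega
    constructor
    · intro hodd
      rcases h4 with h4 | h4 | h4 | h4
      · omega
      · -- z ≡ 1 mod 4 : W z = W m ((z-1)/2) + 1, (z-1)/2 even
        rw [W_odd1 h4]
        have hy : (z-1)/2 % 2 = 0 := by omega
        constructor
        · rw [W_even (x := z+1) (by omega)]
          have e : (z+1)/2 = (z-1)/2 + 1 := by omega
          rw [e]
          exact ((ih ((z-1)/2)).2 hy).1
        · rw [W_even (x := z-1) (by omega)]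
          have e : (z-1)/2 = (z-1)/2 := rfl
          omega
      · omega
      · -- z ≡ 3 mod 4 : W z = W m ((z+1)/2) + 1, (z+1)/2 even
        rw [W_odd3 h4]
        have hy : (z+1)/2 % 2 = 0 := by omega
        constructor
        · rw [W_even (x := z+1) (by omega)]
          omega
        · rw [W_even (x := z-1) (by omega)]
          have e : (z-1)/2 = (z+1)/2 - 1 := by omega
          rw [e]
          have := ((ih ((z+1)/2)).2 hy).2
          omega
    · intro heven
      rcases h4 with h4 | h4 | h4 | h4
      · -- z ≡ 0 mod 4
        rw [W_even (x := z) (by omega)]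
        constructor
        · rw [W_odd1 (x := z+1) (by omega)]
          have e : (z+1-1)/2 = z/2 := by omega
          rw [e]
        · rw [W_odd3 (x := z-1) (by omega)]
          have e : (z-1+1)/2 = z/2 := by omega
          rw [e]
      · omega
      · -- z ≡ 2 mod 4 : z/2 odd
        rw [W_even (x := z) (by omega)]
        have hy : z/2 % 2 = 1 := by omega
        constructor
        · rw [W_odd3 (x := z+1) (by omega)]
          have e : (z+1+1)/2 = z/2 + 1 := by omega
          rw [e]
          have := ((ih (z/2)).1 hy).1
          omega
        · rw [W_odd1 (x := z-1) (by omega)]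
          have e : (z-1-1)/2 = z/2 - 1 := by omega
          rw [e]
          have := ((ih (z/2)).1 hy).2
          omega
      · omega

def flipStep (p : ℕ × Bool) : ℕ × Bool := (p.1, !p.2)

lemma istep_flip (p : ℕ × Bool) : istep (flipStep p) = - istep p := by
  rcases p with ⟨i, b⟩; cases b <;> simp [istep, flipStep]

lemma isum_flip (L : List (ℕ × Bool)) : isum (L.map flipStep) = - isum L := by
  induction L with
  | nil => simp
  | cons p L ih => simp [ih, istep_flip]; ring

lemma binrep : ∀ (m n : ℕ), n < 2^m →
    ∃ B : List (ℕ × Bool), (∀ p ∈ B, p.1 < m) ∧ isum B = (n : ℤ) ∧ B.length ≤ n := by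
  intro m
  induction m with
  | zero => intro n hn; interval_cases n; exact ⟨[], by simp, by simp, by simp⟩
  | succ m ih =>
    intro n hn
    have hn2 : n / 2 < 2^m := by
      rw [pow_succ] at hn; omega
    obtain ⟨B', hB'lt, hB'sum, hB'len⟩ := ih (n/2) hn2
    refine ⟨(if n % 2 = 1 then [(0, true)] else []) ++ B'.map up, ?_, ?_, ?_⟩
    · intro p hp
      rw [List.mem_append] at hp
      rcases hp with hp | hp
      · by_cases h : n % 2 = 1 <;> simp [h] at hp
        · simp [hp]
      · obtain ⟨q, hq, rfl⟩ := List.mem_map.1 hp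
        have := hB'lt q hq; simp only [up]; omega
    · rw [isum_append, isum_up, hB'sum]
      by_cases h : n % 2 = 1
      · simp [h, istep]
        push_cast
        omega
      · simp [h]
        push_cast
        omega
    · rw [List.length_append, List.length_map]
      by_cases h : n % 2 = 1 <;> simp [h] <;> omega

lemma intrep : ∀ (m : ℕ) (c : ℤ),
    ∃ B : List (ℕ × Bool), (∀ p ∈ B, p.1 < m) ∧ (2^m : ℤ) ∣ c - isum B ∧ B.length ≤ c.natAbs := by
  intro m c
  have hpos : 0 < 2^m := Nat.pow_pos (by norm_num)
  set n : ℕ := c.natAbs % 2^m with hn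
  have hlt : n < 2^m := Nat.mod_lt _ hpos
  obtain ⟨B0, hlt0, hsum0, hlen0⟩ := binrep m n hlt
  have hdvd : (2^m : ℤ) ∣ (c.natAbs : ℤ) - n := by
    have h0 := Nat.mod_add_div c.natAbs (2^m)
    have h0' : ((c.natAbs % 2^m : ℕ) : ℤ) + (2:ℤ)^m * ((c.natAbs / 2^m : ℕ) : ℤ) = (c.natAbs : ℤ) := by
      exact_mod_cast h0
    refine ⟨((c.natAbs / 2^m : ℕ) : ℤ), ?_⟩
    rw [hn]
    linarith
  by_cases hc : 0 ≤ c
  · refine ⟨B0, hlt0, ?_, le_trans hlen0 (Nat.mod_le _ _)⟩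
    rw [hsum0]
    have : (c.natAbs : ℤ) = c := Int.natAbs_of_nonneg hc
    rw [← this]; exact hdvd
  · refine ⟨B0.map flipStep, ?_, ?_, ?_⟩
    · intro p hp
      obtain ⟨q, hq, rfl⟩ := List.mem_map.1 hp
      exact hlt0 q hq
    · rw [isum_flip, hsum0]
      have : (c.natAbs : ℤ) = -c := by omega
      obtain ⟨k, hk⟩ := hdvd
      refine ⟨-k, ?_⟩
      have e : (2:ℤ)^m * (-k) = -((2:ℤ)^m * k) := by ring
      rw [e]
      linarith
    · rw [List.length_map]; exact le_trans hlen0 (Nat.mod_le _ _)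

def down (p : ℕ × Bool) : ℕ × Bool := (p.1 - 1, p.2)

lemma isum_down {L : List (ℕ × Bool)} (h : ∀ p ∈ L, 1 ≤ p.1) :
    isum L = 2 * isum (L.map down) := by
  induction L with
  | nil => simp
  | cons p L ih =>
    have h1 : 1 ≤ p.1 := h p (by simp)
    have : istep p = 2 * istep (down p) := by
      rcases p with ⟨i, b⟩
      simp only [down]
      obtain ⟨j, rfl⟩ : ∃ j, i = j + 1 := ⟨i - 1, by omega⟩
      cases b <;> simp [istep, pow_succ] <;> ring
    simp [this, ih (fun q hq => h q (by simp [hq]))]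
    ring

lemma abs_isum_exp0 {L : List (ℕ × Bool)} (h : ∀ p ∈ L, p.1 = 0) :
    (isum L).natAbs ≤ L.length := by
  induction L with
  | nil => simp
  | cons p L ih =>
    have h1 : p.1 = 0 := h p (by simp)
    have habs : (istep p).natAbs = 1 := by
      rcases p with ⟨i, b⟩; simp at h1; subst h1; cases b <;> simp [istep]
    have := ih (fun q hq => h q (by simp [hq]))
    rw [isum_cons, List.length_cons]
    calc (istep p + isum L).natAbs ≤ (istep p).natAbs + (isum L).natAbs := Int.natAbs_add_le _ _
    _ ≤ 1 + L.length := by omega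
    _ = L.length + 1 := by omega

lemma filter_len (f : (ℕ × Bool) → Bool) (L : List (ℕ × Bool)) :
    (L.filter f).length + (L.filter (fun p => !(f p))).length = L.length := by
  induction L with
  | nil => simp
  | cons p L ih => cases hf : f p <;> simp [List.filter_cons, hf] <;> omega

lemma filter_isum (f : (ℕ × Bool) → Bool) (L : List (ℕ × Bool)) :
    isum (L.filter f) + isum (L.filter (fun p => !(f p))) = isum L := by
  induction L with
  | nil => simp
  | cons p L ih => cases hf : f p <;> simp [List.filter_cons, hf, isum_cons] <;> linarith

theorem Wmin : ∀ (m : ℕ) (L : List (ℕ × Bool)) (x : ℤ),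
    (∀ p ∈ L, p.1 < m) → (2^m : ℤ) ∣ x - isum L → W m x ≤ L.length := by
  intro m
  induction m with
  | zero => intro L x _ _; rw [W_zero_m]; omega
  | succ m ih =>
    intro L x hLlt hdvd
    set f : (ℕ × Bool) → Bool := fun p => p.1 = 0 with hf
    set L0 := L.filter f with hL0
    set L1 := L.filter (fun p => !(f p)) with hL1
    have hlen : L0.length + L1.length = L.length := filter_len f L
    have hsum : isum L0 + isum L1 = isum L := filter_isum f L
    have hL0e : ∀ p ∈ L0, p.1 = 0 := by
      intro p hp
      have := (List.mem_filter.1 hp).2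
      simpa [hf] using this
    have hL1e : ∀ p ∈ L1, 1 ≤ p.1 := by
      intro p hp
      have := (List.mem_filter.1 hp).2
      simp [hf] at this
      omega
    set s0 := isum L0 with hs0
    set a := L0.length with ha
    have habs : s0.natAbs ≤ a := abs_isum_exp0 hL0e
    set R := L1.map down with hR
    have hRsum : isum L1 = 2 * isum R := isum_down hL1e
    have hRlt : ∀ p ∈ R, p.1 < m := by
      intro p hp
      obtain ⟨q, hq, rfl⟩ := List.mem_map.1 hp
      have h1 := hL1e q hq
      have h2 := hLlt q (List.mem_of_mem_filter hq)
      simp only [down]; omega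
    have hRlen : R.length = L1.length := List.length_map _
    obtain ⟨k, hk⟩ := hdvd
    rw [pow_succ] at hk
    set r := isum R with hr
    have hkey : x - s0 - 2 * r = 2 * (2^m * k) := by
      rw [← hsum, hRsum] at hk; linarith
    set u : ℤ := 2^m * k with hu
    have hkey2 : x = s0 + 2 * r + 2 * u := by omega
    by_cases hx : x % 2 = 0
    · -- even case
      have hs0e : s0 % 2 = 0 := by omega
      set c := s0 / 2 with hc
      obtain ⟨Bc, hBclt, hBcdvd, hBclen⟩ := intrep m c
      obtain ⟨k2, hk2⟩ := hBcdvd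
      have hM : W m (x/2) ≤ (R ++ Bc).length := by
        apply ih
        · intro p hp
          rw [List.mem_append] at hp
          rcases hp with hp | hp
          · exact hRlt p hp
          · exact hBclt p hp
        · rw [isum_append]
          refine ⟨k + k2, ?_⟩
          have h1 : x / 2 = c + r + u := by omega
          have e : (2:ℤ)^m * (k + k2) = u + 2^m * k2 := by rw [hu]; ring
          rw [e]
          linarith
      rw [W_even hx]
      have hclen : c.natAbs ≤ a := by omega
      calc W m (x/2) ≤ (R ++ Bc).length := hM
        _ = R.length + Bc.length := List.length_append
        _ ≤ L1.length + a := by omega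
        _ = L.length := by omega
    · -- odd case
      have hs0odd : s0 % 2 = 1 := by omega
      have ha1 : 1 ≤ a := by
        by_contra h
        have h0 : L0 = [] := List.length_eq_zero_iff.1 (by omega)
        rw [h0] at hs0
        simp [hs0] at hs0odd
      set d : ℤ := if x % 4 = 1 then 1 else -1 with hd
      have hdcase : (d = 1 ∧ x % 4 = 1) ∨ (d = -1 ∧ x % 4 = 3) := by
        by_cases h41 : x % 4 = 1
        · left; exact ⟨by simp [hd, h41], h41⟩
        · right; refine ⟨by simp [hd, h41], by omega⟩
      have hWx : W (m+1) x = W m ((x - d)/2) + 1 := by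
        rcases hdcase with ⟨hd1, h41⟩ | ⟨hd1, h41⟩
        · rw [hd1, W_odd1 h41]
        · rw [hd1]
          have e : x - (-1) = x + 1 := by ring
          rw [e, W_odd3 h41]
      have hdodd : d = 1 ∨ d = -1 := by
        rcases hdcase with ⟨h, _⟩ | ⟨h, _⟩
        · exact Or.inl h
        · exact Or.inr h
      set c := (s0 - d) / 2 with hc
      have hceq : s0 = 2 * c + d := by rcases hdodd with h | h <;> omega
      by_cases hcase : c = 0 ∨ 2 ≤ a
      · -- generic case
        obtain ⟨Bc, hBclt, hBcdvd, hBclen⟩ := intrep m c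
        obtain ⟨k2, hk2⟩ := hBcdvd
        have hBclen' : Bc.length ≤ a - 1 := by
          rcases hcase with hc0 | ha2
          · omega
          · rcases hdodd with h | h <;> omega
        have hM : W m ((x - d)/2) ≤ (R ++ Bc).length := by
          apply ih
          · intro p hp
            rw [List.mem_append] at hp
            rcases hp with hp | hp
            · exact hRlt p hp
            · exact hBclt p hp
          · rw [isum_append]
            refine ⟨k + k2, ?_⟩
            have h1 : (x - d) / 2 = c + r + u := by
              rcases hdodd with h | h <;> omega
            have e : (2:ℤ)^m * (k + k2) = u + 2^m * k2 := by rw [hu]; ring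
            rw [e]
            linarith
        rw [hWx]
        calc W m ((x-d)/2) + 1 ≤ (R ++ Bc).length + 1 := by omega
          _ = R.length + Bc.length + 1 := by rw [List.length_append]
          _ ≤ L1.length + (a - 1) + 1 := by omega
          _ ≤ L.length := by omega
      · -- special case : a = 1, c ≠ 0, so s0 = -d
        push_neg at hcase
        obtain ⟨hcne, ha2⟩ := hcase
        have ha1' : a = 1 := by omega
        have hs0pm : s0 = 1 ∨ s0 = -1 := by omega
        have hs0d : s0 = -d := by
          rcases hdodd with h | h <;> rcases hs0pm with h2 | h2 <;> omega
        set v' := (x - s0) / 2 with hv'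
        have hIH : W m v' ≤ R.length := by
          apply ih
          · exact hRlt
          · refine ⟨k, ?_⟩
            have h1 : v' = r + u := by omega
            rw [hu] at h1
            linarith
        have hv'odd : v' % 2 = 1 := by
          rcases hdodd with h | h <;> omega
        have hveq : (x - d)/2 = v' - d := by
          rcases hdodd with h | h <;> omega
        have hnbr := (Lnbr m v').1 hv'odd
        have hWv : W m ((x-d)/2) ≤ W m v' := by
          rw [hveq]
          rcases hdodd with h | h <;> rw [h]
          · exact hnbr.2
          · have e : v' - (-1) = v' + 1 := by ring
            rw [e]; exact hnbr.1
        rw [hWx]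
        have : R.length ≤ L.length - 1 := by omega
        omega

/-! ## Graph side -/

open SimpleGraph

section Graph

variable (m : ℕ)

local notation "NN" => 2^m
local notation "GG" => recCirc (2^m) 2

instance : NeZero (2^m : ℕ) := ⟨(Nat.pow_pos (by norm_num) : 0 < 2^m).ne'⟩

def zstep (p : ℕ × Bool) : ZMod NN := ((istep p : ℤ) : ZMod NN)

def zsum (L : List (ℕ × Bool)) : ZMod NN := ((isum L : ℤ) : ZMod NN)

lemma zsum_nil : zsum m [] = 0 := by simp [zsum]

lemma zsum_cons (p : ℕ × Bool) (L : List (ℕ × Bool)) :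
    zsum m (p :: L) = zstep m p + zsum m L := by
  simp [zsum, zstep, isum_cons]

lemma zstep_true (i : ℕ) : zstep m (i, true) = (2 : ZMod NN)^i := by
  simp [zstep, istep]

lemma zstep_false (i : ℕ) : zstep m (i, false) = -((2 : ZMod NN)^i) := by
  simp [zstep, istep]

lemma two_pow_ne_zero {i : ℕ} (hi : i < m) : ((2 : ZMod NN))^i ≠ 0 := by
  have h : ((2 : ZMod NN))^i = ((2^i : ℕ) : ZMod NN) := by push_cast; ring
  rw [h, Ne, ZMod.natCast_eq_zero_iff]
  rw [Nat.pow_dvd_pow_iff_le_right (by norm_num)]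
  omega

lemma zstep_ne_zero {p : ℕ × Bool} (hp : p.1 < m) : zstep m p ≠ 0 := by
  rcases p with ⟨i, b⟩
  have := two_pow_ne_zero m (i := i) hp
  cases b
  · rw [zstep_false]; simpa using this
  · rw [zstep_true]; exact this

lemma adj_iff {u v : ZMod NN} :
    (GG).Adj u v ↔ u ≠ v ∧ ∃ i < m, v - u = (2 : ZMod NN)^i ∨ u - v = (2 : ZMod NN)^i := by
  have hclog : Nat.clog 2 (2^m) = m := Nat.clog_pow 2 m (by norm_num)
  show (circulantGraph _).Adj u v ↔ _
  rw [circulantGraph_adj]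
  simp only [Set.mem_setOf_eq, hclog, Nat.cast_ofNat, eq_iff_iff]
  constructor
  · rintro ⟨hne, h | h⟩
    · obtain ⟨i, hi, hx⟩ := h
      exact ⟨hne, i, hi, Or.inr hx⟩
    · obtain ⟨i, hi, hx⟩ := h
      exact ⟨hne, i, hi, Or.inl hx⟩
  · rintro ⟨hne, i, hi, hx | hx⟩
    · exact ⟨hne, Or.inr ⟨i, hi, hx⟩⟩
    · exact ⟨hne, Or.inl ⟨i, hi, hx⟩⟩

lemma adj_step (u : ZMod NN) {p : ℕ × Bool} (hp : p.1 < m) :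
    (GG).Adj u (u + zstep m p) := by
  rw [adj_iff]
  refine ⟨fun h => zstep_ne_zero m hp (by linear_combination -h), p.1, hp, ?_⟩
  rcases p with ⟨i, b⟩
  cases b
  · right
    rw [zstep_false]
    ring
  · left
    rw [zstep_true]
    ring

/-- Walk from a list of steps. -/
def wos : (u : ZMod NN) → (L : List (ℕ × Bool)) → (∀ p ∈ L, p.1 < m) → (GG).Walk u (u + zsum m L)
  | u, [], _ => Walk.nil.copy rfl (by rw [zsum_nil, add_zero])
  | u, p :: L, h =>
    (Walk.cons (adj_step m u (h p (by simp)))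
      (wos (u + zstep m p) L (fun q hq => h q (by simp [hq])))).copy rfl
      (by rw [zsum_cons]; ring)

lemma wos_length : ∀ (u : ZMod NN) (L : List (ℕ × Bool)) (h : ∀ p ∈ L, p.1 < m),
    (wos m u L h).length = L.length := by
  intro u L
  induction L generalizing u with
  | nil => intro h; simp [wos]
  | cons p L ih => intro h; simp [wos, ih]

lemma wos_support : ∀ (u : ZMod NN) (L : List (ℕ × Bool)) (h : ∀ p ∈ L, p.1 < m),
    (wos m u L h).support
      = (List.range (L.length + 1)).map (fun n => u + zsum m (L.take n)) := by
  intro u L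
  induction L generalizing u with
  | nil =>
    intro h
    simp [wos, zsum_nil]
  | cons p L ih =>
    intro h
    rw [List.range_succ_eq_map]
    simp only [wos, Walk.support_copy, Walk.support_cons, List.length_cons,
      List.map_cons, List.map_map]
    congr 1
    · simp [zsum_nil]
    · rw [ih (u + zstep m p)]
      congr 1
      funext n
      simp only [Function.comp_apply, List.take_succ_cons, zsum_cons]
      ring

lemma wos_edges_map : ∀ (u : ZMod NN) (L : List (ℕ × Bool)) (h : ∀ p ∈ L, p.1 < m)
    (c : Sym2 (ZMod NN) → ℕ),
    (∀ (a : ZMod NN) (q : ℕ × Bool), q ∈ L → c s(a, a + zstep m q) = q.1 / 2) →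
    (wos m u L h).edges.map c = L.map (fun q => q.1 / 2) := by
  intro u L
  induction L generalizing u with
  | nil => intro h c hc; simp [wos]
  | cons p L ih =>
    intro h c hc
    simp only [wos, Walk.edges_copy, Walk.edges_cons, List.map_cons]
    rw [ih (u + zstep m p) _ c (fun a q hq => hc a q (by simp [hq]))]
    rw [hc u p (by simp)]

lemma isum_block_not_dvd {L : List (ℕ × Bool)} (hne : L ≠ [])
    (hpw : L.Pairwise (fun p q => p.1 < q.1)) (hlt : ∀ p ∈ L, p.1 < m) :
    ¬ (2^m : ℤ) ∣ isum L := by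
  intro hdvd
  obtain ⟨p, L', rfl⟩ := List.exists_cons_of_ne_nil hne
  have hd1 : (2:ℤ)^(p.1+1) ∣ isum L' := by
    apply List.dvd_sum
    intro x hx
    obtain ⟨q, hq, rfl⟩ := List.mem_map.1 hx
    have hlt' : p.1 < q.1 := (List.pairwise_cons.1 hpw).1 q hq
    have h2 : (2:ℤ)^(p.1+1) ∣ 2^q.1 := pow_dvd_pow 2 (by omega)
    rcases q with ⟨j, b⟩
    cases b
    · simpa [istep] using h2.neg_right
    · simpa [istep] using h2
  have hd2 : (2:ℤ)^(p.1+1) ∣ isum (p :: L') := by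
    refine dvd_trans (pow_dvd_pow 2 ?_) hdvd
    have := hlt p (by simp)
    omega
  have hd3 : (2:ℤ)^(p.1+1) ∣ istep p := by
    have := dvd_sub hd2 hd1
    simpa [isum_cons] using this
  have hd4 : (2:ℤ)^(p.1+1) ∣ 2^p.1 := by
    rcases p with ⟨i, b⟩
    cases b
    · simpa [istep] using hd3.neg_right
    · simpa [istep] using hd3
  have h5 := Int.le_of_dvd (by positivity) hd4
  have h6 : (0:ℤ) < 2^p.1 := by positivity
  rw [pow_succ] at h5
  nlinarith

end Graph

/-! ## Coloring and main lemmas -/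

section Color

variable (m : ℕ)

local notation "NN" => 2^m
local notation "GG" => recCirc (2^m) 2

lemma zsum_append (L M : List (ℕ × Bool)) : zsum m (L ++ M) = zsum m L + zsum m M := by
  simp [zsum, isum_append]

lemma notdvd (a b : ℕ) (ε : ℤ) (ha : a < m) (hab : a < b) :
    ¬ (2^m : ℤ) ∣ (2^a + ε * 2^b) := by
  intro h
  have h1 : (2:ℤ)^(a+1) ∣ 2^a + ε*2^b := dvd_trans (pow_dvd_pow 2 (by omega)) h
  have h2 : (2:ℤ)^(a+1) ∣ ε * 2^b := Dvd.dvd.mul_left (pow_dvd_pow 2 (by omega)) ε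
  have h3 : (2:ℤ)^(a+1) ∣ 2^a := by
    have := dvd_sub h1 h2
    simpa using this
  have h4 := Int.le_of_dvd (by positivity) h3
  rw [pow_succ] at h4
  nlinarith [pow_pos (show (0:ℤ) < 2 by norm_num) a]

lemma zmod_eq_dvd (y z : ℤ) (h : ((y : ℤ) : ZMod NN) = ((z : ℤ) : ZMod NN)) :
    (2^m : ℤ) ∣ y - z := by
  have h0 : ((y - z : ℤ) : ZMod NN) = 0 := by push_cast; rw [sub_eq_zero]; exact_mod_cast h
  rw [ZMod.intCast_zmod_eq_zero_iff_dvd] at h0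
  exact_mod_cast h0

lemma two_pow_hi {i : ℕ} (hi : m ≤ i) : ((2 : ZMod NN))^i = 0 := by
  have h : ((2 : ZMod NN))^i = ((2^i : ℕ) : ZMod NN) := by push_cast; ring
  rw [h, ZMod.natCast_eq_zero_iff]
  exact Nat.pow_dvd_pow 2 hi

lemma pow_uniq {i i' : ℕ} (hi : i < m) (hi' : i' < m)
    (h : ((2:ZMod NN))^i' = (2:ZMod NN)^i ∨ ((2:ZMod NN))^i' = -((2:ZMod NN))^i) :
    i' = i := by
  rcases lt_trichotomy i' i with hc | hc | hc
  · exfalso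
    rcases h with h | h
    · have hd : (2^m:ℤ) ∣ ((2:ℤ)^i' - 2^i) :=
        zmod_eq_dvd m _ _ (by push_cast; exact h)
      exact notdvd m i' i (-1) hi' hc
        (by rw [show (2:ℤ)^i' + (-1)*2^i = 2^i' - 2^i by ring]; exact hd)
    · have hd : (2^m:ℤ) ∣ ((2:ℤ)^i' - -(2^i)) :=
        zmod_eq_dvd m _ _ (by push_cast; exact h)
      exact notdvd m i' i 1 hi' hc
        (by rw [show (2:ℤ)^i' + 1*2^i = 2^i' - -(2^i) by ring]; exact hd)
  · exact hc
  · exfalso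
    rcases h with h | h
    · have hd : (2^m:ℤ) ∣ ((2:ℤ)^i' - 2^i) :=
        zmod_eq_dvd m _ _ (by push_cast; exact h)
      exact notdvd m i i' (-1) hi hc
        (by rw [show (2:ℤ)^i + (-1)*2^i' = -(2^i' - 2^i) by ring]; exact dvd_neg.2 hd)
    · have hd : (2^m:ℤ) ∣ ((2:ℤ)^i' - -(2^i)) :=
        zmod_eq_dvd m _ _ (by push_cast; exact h)
      exact notdvd m i i' 1 hi hc
        (by rw [show (2:ℤ)^i + 1*2^i' = 2^i' - -(2^i) by ring]; exact hd)

noncomputable def colf (a b : ZMod NN) : ℕ :=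
  sInf {i | b - a = (2:ZMod NN)^i ∨ a - b = (2:ZMod NN)^i} / 2

lemma colf_symm (a b : ZMod NN) : colf m a b = colf m b a := by
  have h : {i | b - a = (2:ZMod NN)^i ∨ a - b = (2:ZMod NN)^i}
      = {i | a - b = (2:ZMod NN)^i ∨ b - a = (2:ZMod NN)^i} := by
    ext i; exact or_comm
  unfold colf
  rw [h]

/-- The coloring: an edge of jump `2^i` gets color `⌊i/2⌋`. -/
noncomputable def col : Sym2 (ZMod NN) → ℕ :=
  Sym2.lift ⟨colf m, colf_symm m⟩

lemma col_eq {a b : ZMod NN} {i : ℕ} (hi : i < m)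
    (h : b - a = (2:ZMod NN)^i ∨ a - b = (2:ZMod NN)^i) :
    col m s(a, b) = i / 2 := by
  have hset : {i' | b - a = (2:ZMod NN)^i' ∨ a - b = (2:ZMod NN)^i'} = {i} := by
    ext i'
    simp only [Set.mem_setOf_eq, Set.mem_singleton_iff]
    constructor
    · intro h'
      by_cases hi' : i' < m
      · apply pow_uniq m hi hi'
        rcases h with h | h <;> rcases h' with h' | h'
        · left; rw [← h, ← h']
        · right; rw [← h']; linear_combination -h
        · right; rw [← h']; linear_combination -h
        · left; rw [← h, ← h']
      · exfalso
        have h0 : ((2:ZMod NN))^i' = 0 := two_pow_hi m (by omega)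
        apply two_pow_ne_zero m hi
        rcases h with h | h <;> rcases h' with h' | h'
        · rw [← h, h', h0]
        · rw [← h, show b - a = -(a - b) by ring, h', h0, neg_zero]
        · rw [← h, show a - b = -(b - a) by ring, h', h0, neg_zero]
        · rw [← h, h', h0]
    · rintro rfl
      exact h
  show colf m a b = i / 2
  unfold colf
  rw [hset, csInf_singleton]

lemma col_lt {e : Sym2 (ZMod NN)} (he : e ∈ (GG).edgeSet) : col m e < (m+1)/2 := by
  induction e with
  | _ a b =>
    rw [mem_edgeSet, adj_iff] at he
    obtain ⟨_, i, hi, hcase⟩ := he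
    rw [col_eq m hi hcase]
    omega

lemma col_step (a : ZMod NN) (q : ℕ × Bool) (hq : q.1 < m) :
    col m s(a, a + zstep m q) = q.1 / 2 := by
  apply col_eq m hq
  rcases q with ⟨i, b⟩
  cases b
  · right; rw [zstep_false]; ring
  · left; rw [zstep_true]; ring

lemma walk_steps : ∀ {u v : ZMod NN} (p : (GG).Walk u v),
    ∃ Lw : List (ℕ × Bool), (∀ q ∈ Lw, q.1 < m) ∧ zsum m Lw = v - u ∧ Lw.length = p.length := by
  intro u v p
  induction p with
  | nil => exact ⟨[], by simp, by simp [zsum_nil], rfl⟩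
  | @cons u w v h p ih =>
    obtain ⟨Lw, hlt, hsum, hlen⟩ := ih
    rw [adj_iff] at h
    obtain ⟨hne, i, hi, hcase⟩ := h
    rcases hcase with hc | hc
    · refine ⟨(i, true) :: Lw, ?_, ?_, ?_⟩
      · intro q hq
        rcases List.mem_cons.1 hq with rfl | hq
        · exact hi
        · exact hlt q hq
      · rw [zsum_cons, zstep_true, hsum]; linear_combination -hc
      · simp [hlen]
    · refine ⟨(i, false) :: Lw, ?_, ?_, ?_⟩
      · intro q hq
        rcases List.mem_cons.1 hq with rfl | hq
        · exact hi
        · exact hlt q hq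
      · rw [zsum_cons, zstep_false, hsum]; linear_combination hc
      · simp [hlen]

lemma cast_val_eq (x : ZMod NN) : (((x.val : ℕ) : ℤ) : ZMod NN) = x := by
  push_cast
  rw [ZMod.natCast_val, ZMod.cast_id]

lemma zsum_naf_eq (x : ZMod NN) : zsum m (naf m ((x.val : ℕ) : ℤ)) = x := by
  have h1 : (2^m : ℤ) ∣ ((x.val : ℕ) : ℤ) - isum (naf m ((x.val : ℕ) : ℤ)) := naf_dvd m _
  have h2 : ((((x.val : ℕ) : ℤ) - isum (naf m ((x.val : ℕ) : ℤ)) : ℤ) : ZMod NN) = 0 := by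
    rw [ZMod.intCast_zmod_eq_zero_iff_dvd]
    exact_mod_cast h1
  have h3 := cast_val_eq m x
  rw [zsum]
  push_cast at h2 h3 ⊢
  linear_combination h3 - h2

/-- The canonical walk from u to v. -/
noncomputable def cwalk (u v : ZMod NN) : (GG).Walk u v :=
  (wos m u (naf m (((v - u).val : ℕ) : ℤ)) (naf_exp_lt m _)).copy rfl
    (by rw [zsum_naf_eq m (v - u)]; exact add_sub_cancel u v)

lemma cwalk_length (u v : ZMod NN) : (cwalk m u v).length = W m (((v - u).val : ℕ) : ℤ) := by
  rw [cwalk, Walk.length_copy, wos_length]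
  rfl

lemma cwalk_isPath (u v : ZMod NN) : (cwalk m u v).IsPath := by
  set L := naf m (((v - u).val : ℕ) : ℤ) with hL
  have hLlt : ∀ p ∈ L, p.1 < m := naf_exp_lt m _
  have hLpw : L.Pairwise (fun p q => p.1 < q.1) :=
    (naf_pairwise m _).imp (fun h => by omega)
  rw [Walk.isPath_def, cwalk, Walk.support_copy, wos_support]
  have key : ∀ n1 n2 : ℕ, n1 < n2 → n2 ≤ L.length →
      u + zsum m (L.take n1) ≠ u + zsum m (L.take n2) := by
    intro n1 n2 hlt hle heq
    have hblk : L.take n2 = L.take n1 ++ (L.drop n1).take (n2 - n1) := by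
      rw [← List.take_add]
      congr 1
      omega
    set B := (L.drop n1).take (n2 - n1) with hB
    have hsub : B.Sublist L := ((L.drop n1).take_sublist _).trans (L.drop_sublist n1)
    have hBlen : B.length = n2 - n1 := by
      rw [hB, List.length_take, List.length_drop]
      exact min_eq_left (by omega)
    have hBne : B ≠ [] := by
      intro h0
      rw [h0] at hBlen
      simp only [List.length_nil] at hBlen
      omega
    have hBpw : B.Pairwise (fun p q => p.1 < q.1) := hLpw.sublist hsub
    have hBlt : ∀ p ∈ B, p.1 < m := fun p hp => hLlt p (hsub.mem hp)
    apply isum_block_not_dvd m hBne hBpw hBlt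
    have h1 : zsum m (L.take n1) = zsum m (L.take n1) + zsum m B := by
      have := add_left_cancel heq
      rw [hblk, zsum_append] at this
      exact this
    have h2 : zsum m B = 0 := by linear_combination -h1
    rw [zsum, ZMod.intCast_zmod_eq_zero_iff_dvd] at h2
    exact_mod_cast h2
  apply List.Nodup.map_on _ List.nodup_range
  intro n1 h1 n2 h2 heq
  rw [List.mem_range] at h1 h2
  have hLL : (naf m (((v - u).val : ℕ) : ℤ)).length = L.length := by rw [hL]
  rw [hLL] at h1 h2
  by_contra hne
  rcases lt_or_gt_of_ne hne with hc | hc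
  · exact key n1 n2 hc (by omega) heq
  · exact key n2 n1 hc (by omega) heq.symm

lemma dist_eq (u v : ZMod NN) : (GG).dist u v = W m (((v - u).val : ℕ) : ℤ) := by
  apply le_antisymm
  · have := SimpleGraph.dist_le (cwalk m u v)
    rwa [cwalk_length] at this
  · obtain ⟨p, hp⟩ := (Reachable.exists_walk_length_eq_dist ⟨cwalk m u v⟩ : _)
    rw [← hp]
    obtain ⟨Lw, hl1, hl2, hl3⟩ := walk_steps m p
    rw [← hl3]
    apply Wmin m Lw _ hl1
    apply zmod_eq_dvd
    rw [cast_val_eq m (v - u), ← hl2]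
    rfl

lemma cwalk_colors (u v : ZMod NN) :
    ((cwalk m u v).edges.map (col m)).Nodup := by
  rw [cwalk, Walk.edges_copy, wos_edges_map m _ _ _ (col m)
    (fun a q hq => col_step m a q (naf_exp_lt m _ q hq))]
  have hpw := naf_pairwise m ((((v - u).val : ℕ) : ℤ))
  exact hpw.map _ (fun p q h => by omega)

lemma strongRC : StrongRainbowConnected (GG) ((m+1)/2) := by
  refine ⟨col m, fun e he => col_lt m he, fun u v => ?_⟩
  refine ⟨cwalk m u v, cwalk_isPath m u v, ?_, cwalk_colors m u v⟩
  rw [cwalk_length, dist_eq]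

end Color

/-! ## The distinguished vertex and its distance -/

def z0 (h : ℕ) : ℤ := ∑ j ∈ Finset.range h, 4^j

lemma z0_succ (h : ℕ) : z0 (h+1) = 4 * z0 h + 1 := by
  rw [z0, Finset.sum_range_succ', z0, Finset.mul_sum]
  congr 1
  exact Finset.sum_congr rfl (fun j _ => by ring)

lemma W_z0 : ∀ (h mm : ℕ), 2 * h ≤ mm → W mm (z0 h) = h := by
  intro h
  induction h with
  | zero => intro mm _; simpa [z0] using W_zero mm
  | succ h ih =>
    intro mm hmm
    obtain ⟨m', rfl⟩ : ∃ m', mm = m' + 1 + 1 := ⟨mm - 2, by omega⟩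
    have h4 : z0 (h+1) % 4 = 1 := by rw [z0_succ]; omega
    rw [W_odd1 h4]
    have e1 : (z0 (h+1) - 1)/2 = 2 * z0 h := by rw [z0_succ]; omega
    rw [e1, W_even (by omega)]
    have e2 : (2 * z0 h)/2 = z0 h := by omega
    rw [e2, ih m' (by omega)]

end RCaux

/-- ⌊m/2⌋ ≤ rc(G(2^m,2)) ≤ src(G(2^m,2)) ≤ ⌈m/2⌉, with equality m/2 when m is even. -/
theorem rc_src_recCirc_two (m : ℕ) (hm : 1 ≤ m) :
    m / 2 ≤ rc (recCirc (2 ^ m) 2) ∧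
    rc (recCirc (2 ^ m) 2) ≤ src (recCirc (2 ^ m) 2) ∧
    src (recCirc (2 ^ m) 2) ≤ (m + 1) / 2 ∧
    (Even m → rc (recCirc (2 ^ m) 2) = m / 2 ∧ src (recCirc (2 ^ m) 2) = m / 2) := by
  classical
  have hstrong := RCaux.strongRC m
  have hweak : ∀ k, StrongRainbowConnected (recCirc (2^m) 2) k →
      RainbowConnected (recCirc (2^m) 2) k := by
    rintro k ⟨c, h1, h2⟩
    refine ⟨c, h1, fun u v => ?_⟩
    obtain ⟨p, hp1, _, hp3⟩ := h2 u v
    exact ⟨p, hp1, hp3⟩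
  have hrb := hweak _ hstrong
  have hsrc_le : src (recCirc (2^m) 2) ≤ (m+1)/2 :=
    Nat.sInf_le (show ((m+1)/2) ∈ {k | StrongRainbowConnected _ k} from hstrong)
  have hsrc_mem : StrongRainbowConnected (recCirc (2^m) 2) (src (recCirc (2^m) 2)) :=
    Nat.sInf_mem (⟨(m+1)/2, hstrong⟩ : Set.Nonempty {k | StrongRainbowConnected _ k})
  have hrc_le_src : rc (recCirc (2^m) 2) ≤ src (recCirc (2^m) 2) :=
    Nat.sInf_le (show src (recCirc (2^m) 2) ∈ {k | RainbowConnected _ k} from hweak _ hsrc_mem)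
  have hrc_mem : RainbowConnected (recCirc (2^m) 2) (rc (recCirc (2^m) 2)) :=
    Nat.sInf_mem (⟨(m+1)/2, hrb⟩ : Set.Nonempty {k | RainbowConnected _ k})
  have hlow : m / 2 ≤ rc (recCirc (2^m) 2) := by
    obtain ⟨c, hc, hpaths⟩ := hrc_mem
    set n0 : ℕ := ∑ j ∈ Finset.range (m/2), 4^j with hn0
    set x0 : ZMod (2^m) := (n0 : ZMod (2^m)) with hx0
    obtain ⟨p, hp, hnd⟩ := hpaths 0 x0
    have hdist : (recCirc (2^m) 2).dist 0 x0 = m / 2 := by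
      rw [RCaux.dist_eq m 0 x0, sub_zero]
      have hv : x0.val = n0 % 2^m := ZMod.val_natCast (2^m) n0
      have hval : (2^m : ℤ) ∣ ((x0.val : ℕ) : ℤ) - (n0 : ℤ) := by
        have hmd := Nat.mod_add_div n0 (2^m)
        have hmd' : ((n0 % 2^m : ℕ) : ℤ) + (2:ℤ)^m * ((n0 / 2^m : ℕ) : ℤ) = (n0 : ℤ) := by
          exact_mod_cast hmd
        refine ⟨-(((n0 / 2^m : ℕ)) : ℤ), ?_⟩
        rw [hv]
        have e : (2:ℤ)^m * -(((n0 / 2^m : ℕ)) : ℤ)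
            = -((2:ℤ)^m * (((n0 / 2^m : ℕ)) : ℤ)) := by ring
        rw [e]
        linarith
      rw [RCaux.W_mod m _ _ hval]
      have hz : ((n0 : ℕ) : ℤ) = RCaux.z0 (m/2) := by
        rw [RCaux.z0, hn0]
        push_cast
        rfl
      rw [hz, RCaux.W_z0 (m/2) m (by omega)]
    have hlen : m / 2 ≤ p.length := by
      rw [← hdist]
      exact SimpleGraph.dist_le p
    have hbound : p.length ≤ rc (recCirc (2^m) 2) := by
      have h1 : (p.edges.map c).length = p.length := by
        rw [List.length_map, SimpleGraph.Walk.length_edges]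
      have hsubfin : (p.edges.map c).toFinset ⊆ Finset.range (rc (recCirc (2^m) 2)) := by
        intro y hy
        rw [List.mem_toFinset] at hy
        obtain ⟨e, he, rfl⟩ := List.mem_map.1 hy
        rw [Finset.mem_range]
        exact hc e (p.edges_subset_edgeSet he)
      calc p.length = (p.edges.map c).length := h1.symm
        _ = (p.edges.map c).toFinset.card := (List.toFinset_card_of_nodup hnd).symm
        _ ≤ (Finset.range (rc (recCirc (2^m) 2))).card := Finset.card_le_card hsubfin
        _ = rc (recCirc (2^m) 2) := Finset.card_range _
    omega
  refine ⟨hlow, hrc_le_src, hsrc_le, fun hev => ?_⟩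
  obtain ⟨t, ht⟩ := hev
  constructor <;> omega
end

section
/- For d = 2r+1 with r ≥ 4 even and m ≥ 1, rc(G(rd^m,d)) = src(G(rd^m,d)) = r·m + r/2. -/
open SimpleGraph Finset

namespace RCD
open SimpleGraph



/-- balanced residue mod D = 4s+1, in [-2s, 2s] -/
def bal (s : ℕ) (x : ℤ) : ℤ := (x + 2*s) % (4*s+1) - 2*s

/-- balanced residue mod R = 2s, in [-(s-1), s] -/
def balTop (s : ℕ) (x : ℤ) : ℤ := (x + (s - 1)) % (2*s) - (s - 1)

def digs (s : ℕ) : ℕ → ℤ → List ℤ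
  | 0, x => [balTop s x]
  | (k+1), x => bal s x :: digs s k ((x - bal s x) / (4*s+1))

def ofDigs (s : ℕ) : List ℤ → ℤ
  | [] => 0
  | a :: l => a + (4*s+1) * ofDigs s l

def Wn : List ℤ → ℕ := fun L => (L.map Int.natAbs).sum

variable {s : ℕ}

lemma bal_abs_le (hs : 1 ≤ s) (x : ℤ) : |bal s x| ≤ 2*s := by
  have h0 : (0:ℤ) < 4*s+1 := by positivity
  have h1 := Int.emod_nonneg (x + 2*s) (by omega : (4*(s:ℤ)+1) ≠ 0)
  have h2 := Int.emod_lt_of_pos (x + 2*s) h0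
  unfold bal; rw [abs_le]; omega

lemma bal_dvd (x : ℤ) : (4*(s:ℤ)+1) ∣ x - bal s x := by
  unfold bal
  have := Int.mul_ediv_add_emod (x + 2*s) (4*s+1)
  refine ⟨(x + 2*s) / (4*s+1), by omega⟩

lemma balTop_abs_le (hs : 1 ≤ s) (x : ℤ) : |balTop s x| ≤ s := by
  have h0 : (0:ℤ) < 2*s := by positivity
  have h1 := Int.emod_nonneg (x + (s-1)) (by omega : (2*(s:ℤ)) ≠ 0)
  have h2 := Int.emod_lt_of_pos (x + (s-1)) h0
  unfold balTop; rw [abs_le]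
  have : (1:ℤ) ≤ s := by exact_mod_cast hs
  omega

lemma balTop_dvd (x : ℤ) : (2*(s:ℤ)) ∣ x - balTop s x := by
  unfold balTop
  have := Int.mul_ediv_add_emod (x + (s-1)) (2*s)
  exact ⟨(x + (s-1)) / (2*s), by omega⟩

lemma Wn_cons (a : ℤ) (L : List ℤ) : Wn (a :: L) = a.natAbs + Wn L := by
  simp [Wn]

lemma digs_spec (hs : 1 ≤ s) : ∀ (m : ℕ) (x : ℤ),
    (2*(s:ℤ) * (4*s+1)^m) ∣ x - ofDigs s (digs s m x) := by
  intro m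
  induction m with
  | zero => intro x; simpa [digs, ofDigs] using balTop_dvd (s := s) x
  | succ k ih =>
    intro x
    obtain ⟨y, hy⟩ := bal_dvd (s := s) x
    have hyq : (x - bal s x) / (4*s+1) = y := by
      rw [hy]; exact Int.mul_ediv_cancel_left y (by positivity)
    obtain ⟨z, hz⟩ := ih y
    refine ⟨z, ?_⟩
    simp only [digs, hyq, ofDigs]
    have : x - (bal s x + (4*↑s+1) * ofDigs s (digs s k y))
        = (4*↑s+1) * (y - ofDigs s (digs s k y)) := by rw [mul_sub, ← hy]; ring
    rw [this, hz]; ring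

lemma digs_length (m : ℕ) (x : ℤ) : (digs s m x).length = m + 1 := by
  induction m generalizing x with
  | zero => simp [digs]
  | succ k ih => simp [digs, ih]

lemma digs_bound (hs : 1 ≤ s) : ∀ (m : ℕ) (x : ℤ) (j : ℕ) (hj : j < (digs s m x).length),
    |(digs s m x)[j]| ≤ if j = m then (s:ℤ) else 2*s := by
  intro m
  induction m with
  | zero =>
    intro x j hj
    simp [digs_length] at hj
    subst hj
    simpa [digs] using balTop_abs_le hs x
  | succ k ih =>
    intro x j hj
    match j with
    | 0 => simpa [digs] using le_trans (bal_abs_le hs x) (by simp)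
    | (j+1) =>
      rw [digs_length] at hj
      have := ih ((x - bal s x) / (4*s+1)) j (by rw [digs_length]; omega)
      have hiff : (j + 1 = k + 1) = (j = k) := by simp
      simpa [digs, hiff] using this

lemma abs_split (hs : 1 ≤ s) {b t : ℤ} (hb : |b| ≤ 2*s) :
    |b| + |t| ≤ |b + (4*s+1) * t| := by
  rcases eq_or_ne t 0 with rfl | ht
  · simp
  · have h1 : (1:ℤ) ≤ |t| := Int.one_le_abs (by exact_mod_cast ht)
    have h2 : |(4*(s:ℤ)+1) * t| ≤ |b + (4*s+1)*t| + |b| := by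
      calc |(4*(s:ℤ)+1) * t| = |(b + (4*s+1)*t) - b| := by ring_nf
        _ ≤ |b + (4*s+1)*t| + |b| := abs_sub _ _
    have h3 : |(4*(s:ℤ)+1) * t| = (4*s+1) * |t| := by
      rw [abs_mul, abs_of_pos (by positivity)]
    nlinarith [abs_nonneg b, abs_nonneg t, abs_nonneg (b + (4*s+1)*t)]

lemma abs_split_top (hs : 1 ≤ s) {b t : ℤ} (hb : |b| ≤ s) :
    |b| ≤ |b + (2*s) * t| := by
  rcases eq_or_ne t 0 with rfl | ht
  · simp
  · have h1 : (1:ℤ) ≤ |t| := Int.one_le_abs (by exact_mod_cast ht)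
    have h2 : |(2*(s:ℤ)) * t| ≤ |b + (2*s)*t| + |b| := by
      calc |(2*(s:ℤ)) * t| = |(b + (2*s)*t) - b| := by ring_nf
        _ ≤ |b + (2*s)*t| + |b| := abs_sub _ _
    have h3 : |(2*(s:ℤ)) * t| = (2*s) * |t| := by
      rw [abs_mul, abs_of_pos (by positivity)]
    have hs' : (1:ℤ) ≤ s := by exact_mod_cast hs
    nlinarith [abs_nonneg b, abs_nonneg t, abs_nonneg (b + (2*s)*t)]

lemma natAbs_cast_le {a b : ℤ} (h : |a| ≤ |b|) : a.natAbs ≤ b.natAbs := by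
  rw [Int.abs_eq_natAbs, Int.abs_eq_natAbs] at h; exact_mod_cast h

lemma min_wn (hs : 1 ≤ s) : ∀ (m : ℕ) (x : ℤ) (L : List ℤ), L.length = m + 1 →
    ((2*(s:ℤ)) * (4*s+1)^m) ∣ ofDigs s L - x → Wn (digs s m x) ≤ Wn L := by
  intro m
  induction m with
  | zero =>
    intro x L hL hdvd
    match L, hL with
    | [n0], _ =>
      have hdvd' : (2*(s:ℤ)) ∣ n0 - x := by simpa [ofDigs] using hdvd
      set b := balTop s x with hb
      have hbb : |b| ≤ (s:ℤ) := balTop_abs_le hs x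
      have h2 : (2*(s:ℤ)) ∣ n0 - b := by
        have := balTop_dvd (s := s) x
        have : (2*(s:ℤ)) ∣ (n0 - x) + (x - b) := dvd_add hdvd' this
        simpa using this
      obtain ⟨t, ht⟩ := h2
      have hn0 : n0 = b + (2*s) * t := by omega
      have : |b| ≤ |n0| := hn0 ▸ abs_split_top hs hbb
      have := natAbs_cast_le this
      simpa [digs, Wn] using this
  | succ k ih =>
    intro x L hL hdvd
    match L, hL with
    | n0 :: n1 :: rest, hL =>
      have hrest : rest.length = k := by simpa using hL
      have hD0 : (4*(s:ℤ)+1) ≠ 0 := by positivity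
      set b := bal s x with hbdef
      have hbb : |b| ≤ 2*(s:ℤ) := bal_abs_le hs x
      obtain ⟨y, hy⟩ := bal_dvd (s := s) x
      have hyq : (x - bal s x) / (4*s+1) = y := by
        rw [hy]; exact Int.mul_ediv_cancel_left y hD0
      -- D divides n0 - b
      have hDdvdL : (4*(s:ℤ)+1) ∣ ofDigs s (n0 :: n1 :: rest) - x := by
        refine dvd_trans ⟨2*(s:ℤ)*(4*s+1)^k, by ring⟩ hdvd
      have hDn0 : (4*(s:ℤ)+1) ∣ n0 - b := by
        have h1 : ofDigs s (n0 :: n1 :: rest) - n0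
            = (4*(s:ℤ)+1) * (n1 + (4*s+1) * ofDigs s rest) := by
          simp only [ofDigs]; ring
        have : (4*(s:ℤ)+1) ∣ (ofDigs s (n0 :: n1 :: rest) - x) + (x - b)
            - (ofDigs s (n0 :: n1 :: rest) - n0) :=
          dvd_sub (dvd_add hDdvdL ⟨y, hy⟩) (h1 ▸ Dvd.intro _ rfl)
        simpa using this
      obtain ⟨t, ht⟩ := hDn0
      obtain ⟨z, hz⟩ := hdvd
      have hkey : ofDigs s ((n1 + t) :: rest) - y = (2*(s:ℤ))*(4*s+1)^k * z := by
        apply mul_left_cancel₀ hD0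
        have : (4*(s:ℤ)+1) * (ofDigs s ((n1 + t) :: rest) - y)
            = ofDigs s (n0 :: n1 :: rest) - x := by
          simp only [ofDigs]
          linear_combination hy - ht
        rw [this, hz]; ring
      have hIH := ih y ((n1 + t) :: rest) (by simpa using hrest) ⟨z, hkey⟩
      -- assemble
      have hsplit : b.natAbs + t.natAbs ≤ n0.natAbs := by
        have hn0 : n0 = b + (4*(s:ℤ)+1) * t := by omega
        have h2 : |b| + |t| ≤ |n0| := by
          calc |b| + |t| ≤ |b + (4*(s:ℤ)+1)*t| := abs_split hs hbb
            _ = |n0| := by rw [← hn0]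
        rw [Int.abs_eq_natAbs, Int.abs_eq_natAbs, Int.abs_eq_natAbs] at h2
        exact_mod_cast h2
      have h1 : (n1 + t).natAbs ≤ n1.natAbs + t.natAbs := Int.natAbs_add_le n1 t
      have hW : Wn (digs s (k+1) x) = b.natAbs + Wn (digs s k y) := by
        simp [digs, hyq, Wn, hbdef]
      rw [Wn_cons] at hIH
      rw [hW, Wn_cons, Wn_cons]
      omega


variable {s m : ℕ}

lemma N_pos (hs : 2 ≤ s) : 0 < 2*s*(4*s+1)^m :=
  Nat.mul_pos (by omega) (pow_pos (by omega) m)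

lemma clog_eq (hs : 2 ≤ s) : Nat.clog (4*s+1) (2*s*(4*s+1)^m) = m + 1 := by
  have hb : 1 < 4*s+1 := by omega
  have h1 : Nat.clog (4*s+1) (2*s*(4*s+1)^m) ≤ m + 1 := by
    rw [Nat.clog_le_iff_le_pow hb]
    calc 2*s*(4*s+1)^m ≤ (4*s+1) * (4*s+1)^m :=
          Nat.mul_le_mul_right _ (by omega)
      _ = (4*s+1)^(m+1) := by ring
  have h2 : m < Nat.clog (4*s+1) (2*s*(4*s+1)^m) := by
    rw [Nat.lt_clog_iff_pow_lt hb]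
    calc (4*s+1)^m = 1 * (4*s+1)^m := (one_mul _).symm
      _ < 2*s*(4*s+1)^m :=
          (Nat.mul_lt_mul_right (pow_pos (by omega) m)).mpr (by omega)
  omega

lemma pow_lt_N (hs : 2 ≤ s) (i : ℕ) (hi : i ≤ m) : (4*s+1)^i < 2*s*(4*s+1)^m := by
  calc (4*s+1)^i ≤ (4*s+1)^m := Nat.pow_le_pow_right (by omega) hi
    _ = 1 * (4*s+1)^m := (one_mul _).symm
    _ < 2*s*(4*s+1)^m := (Nat.mul_lt_mul_right (pow_pos (by omega) m)).mpr (by omega)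

lemma cast_pow_eq (i : ℕ) :
    ((4*s+1 : ℕ) : ZMod (2*s*(4*s+1)^m))^i = (((4*s+1)^i : ℕ) : ZMod (2*s*(4*s+1)^m)) := by
  push_cast; ring

lemma pow_ne_zero_V (hs : 2 ≤ s) (i : ℕ) (hi : i ≤ m) :
    ((4*s+1 : ℕ) : ZMod (2*s*(4*s+1)^m))^i ≠ 0 := by
  rw [cast_pow_eq]
  simp only [ne_eq, ZMod.natCast_eq_zero_iff]
  intro hdvd
  have := Nat.le_of_dvd (pow_pos (by omega) i) hdvd
  have := pow_lt_N hs i hi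
  omega

lemma pow_inj_V (hs : 2 ≤ s) {i j : ℕ} (hi : i ≤ m) (hj : j ≤ m)
    (h : ((4*s+1 : ℕ) : ZMod (2*s*(4*s+1)^m))^i = ((4*s+1 : ℕ) : ZMod (2*s*(4*s+1)^m))^j) :
    i = j := by
  rw [cast_pow_eq, cast_pow_eq, ZMod.natCast_eq_natCast_iff] at h
  have h1 : (4*s+1)^i % (2*s*(4*s+1)^m) = (4*s+1)^j % (2*s*(4*s+1)^m) := h
  rw [Nat.mod_eq_of_lt (pow_lt_N hs i hi), Nat.mod_eq_of_lt (pow_lt_N hs j hj)] at h1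
  exact Nat.pow_right_injective (by omega) h1

lemma pow_ne_neg_V (hs : 2 ≤ s) {i j : ℕ} (hi : i ≤ m) (hj : j ≤ m) :
    ((4*s+1 : ℕ) : ZMod (2*s*(4*s+1)^m))^i ≠ -((4*s+1 : ℕ) : ZMod (2*s*(4*s+1)^m))^j := by
  intro h
  have h0 : (((4*s+1)^i + (4*s+1)^j : ℕ) : ZMod (2*s*(4*s+1)^m)) = 0 := by
    rw [Nat.cast_add, ← cast_pow_eq, ← cast_pow_eq, h]; ring
  rw [ZMod.natCast_eq_zero_iff] at h0
  have hle := Nat.le_of_dvd (by positivity) h0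
  have l1 : (4*s+1)^i ≤ (4*s+1)^m := Nat.pow_le_pow_right (by omega) hi
  have l2 : (4*s+1)^j ≤ (4*s+1)^m := Nat.pow_le_pow_right (by omega) hj
  have l3 : 2 * (4*s+1)^m < 2*s*(4*s+1)^m := by
    have := pow_pos (show 0 < 4*s+1 by omega) m
    have : 2 * (4*s+1)^m < (2*s) * (4*s+1)^m :=
      (Nat.mul_lt_mul_right this).mpr (by omega)
    omega
  omega

lemma adj_step (hs : 2 ≤ s) (i : ℕ) (hi : i ≤ m) (w : ZMod (2*s*(4*s+1)^m)) :
    (recCirc (2*s*(4*s+1)^m) (4*s+1)).Adj w (w + ((4*s+1 : ℕ) : ZMod (2*s*(4*s+1)^m))^i) := by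
  rw [recCirc, circulantGraph_adj]
  constructor
  · intro h
    exact pow_ne_zero_V hs i hi (by linear_combination -h)
  · right
    refine ⟨i, ?_, by ring⟩
    rw [clog_eq hs]; omega

lemma adj_char (hs : 2 ≤ s) {a b : ZMod (2*s*(4*s+1)^m)}
    (h : (recCirc (2*s*(4*s+1)^m) (4*s+1)).Adj a b) :
    (∃ i ≤ m, b - a = ((4*s+1 : ℕ) : ZMod (2*s*(4*s+1)^m))^i) ∨
    (∃ i ≤ m, a - b = ((4*s+1 : ℕ) : ZMod (2*s*(4*s+1)^m))^i) := by
  rw [recCirc, circulantGraph_adj] at h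
  obtain ⟨-, h | h⟩ := h
  · obtain ⟨i, hi, hx⟩ := h
    rw [clog_eq hs] at hi
    exact Or.inr ⟨i, by omega, hx⟩
  · obtain ⟨i, hi, hx⟩ := h
    rw [clog_eq hs] at hi
    exact Or.inl ⟨i, by omega, hx⟩


variable (s m : ℕ)

def PP (a b : ZMod (2*s*(4*s+1)^m)) : Prop :=
  ∃ i, i ≤ m ∧ b - a = ((4*s+1 : ℕ) : ZMod (2*s*(4*s+1)^m))^i

def ψ : ZMod (2*s*(4*s+1)^m) →+* ZMod (2*s) :=
  ZMod.castHom (dvd_mul_right (2*s) ((4*s+1)^m)) (ZMod (2*s))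

lemma ψ_d : ψ s m ((4*s+1 : ℕ) : ZMod (2*s*(4*s+1)^m)) = 1 := by
  rw [map_natCast]
  have hz : (2 * (s : ZMod (2*s))) = 0 := by
    have h0 : ((2*s : ℕ) : ZMod (2*s)) = 0 := ZMod.natCast_self _
    push_cast at h0; exact h0
  push_cast
  linear_combination 2*hz

lemma ψ_pow (i : ℕ) : ψ s m (((4*s+1 : ℕ) : ZMod (2*s*(4*s+1)^m))^i) = 1 := by
  rw [map_pow, ψ_d, one_pow]

noncomputable def colOf (i : ℕ) (y : ZMod (2*s*(4*s+1)^m)) : ℕ :=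
  if i < m then i*(2*s) + (ψ s m y).val else m*(2*s) + (ψ s m y).val % s

open Classical in
noncomputable def gfun (a b : ZMod (2*s*(4*s+1)^m)) : ℕ :=
  if h : PP s m a b then colOf s m h.choose a
  else if h' : PP s m b a then colOf s m h'.choose b else 0

lemma not_PP_both (hs : 2 ≤ s) {a b : ZMod (2*s*(4*s+1)^m)}
    (h : PP s m a b) (h' : PP s m b a) : False := by
  obtain ⟨i, hi, hx⟩ := h
  obtain ⟨j, hj, hy⟩ := h'
  have : ((4*s+1 : ℕ) : ZMod (2*s*(4*s+1)^m))^i = -((4*s+1 : ℕ) : ZMod (2*s*(4*s+1)^m))^j := by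
    linear_combination -hx - hy
  exact pow_ne_neg_V hs hi hj this

lemma gfun_symm (hs : 2 ≤ s) (a b : ZMod (2*s*(4*s+1)^m)) : gfun s m a b = gfun s m b a := by
  classical
  by_cases h : PP s m a b <;> by_cases h' : PP s m b a
  · exact (not_PP_both s m hs h h').elim
  · simp [gfun, h, h']
  · simp [gfun, h, h']
  · simp [gfun, h, h']

noncomputable def ecol (hs : 2 ≤ s) : Sym2 (ZMod (2*s*(4*s+1)^m)) → ℕ :=
  Sym2.lift ⟨gfun s m, gfun_symm s m hs⟩

lemma ecol_lt (hs : 2 ≤ s) (e : Sym2 (ZMod (2*s*(4*s+1)^m))) :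
    ecol s m hs e < 2*s*m + s := by
  classical
  induction e using Sym2.ind with
  | _ a b =>
    haveI : NeZero (2*s) := ⟨by omega⟩
    have hcol : ∀ i y, i ≤ m → colOf s m i y < 2*s*m + s := by
      intro i y hi
      unfold colOf
      split
      · next him =>
        have hv : (ψ s m y).val < 2*s := ZMod.val_lt _
        calc i*(2*s) + (ψ s m y).val < i*(2*s) + 2*s := by omega
          _ = (i+1)*(2*s) := by ring
          _ ≤ m*(2*s) := Nat.mul_le_mul_right _ (by omega)
          _ = 2*s*m := by ring
          _ ≤ 2*s*m + s := by omega
      · have h1 : (ψ s m y).val % s < s := Nat.mod_lt _ (by omega)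
        have hmm : m*(2*s) = 2*s*m := by ring
        omega
    show gfun s m a b < 2*s*m + s
    unfold gfun
    split
    · next h => exact hcol _ _ h.choose_spec.1
    · split
      · next h' => exact hcol _ _ h'.choose_spec.1
      · omega

lemma ecol_step (hs : 2 ≤ s) {i : ℕ} (hi : i ≤ m) (w : ZMod (2*s*(4*s+1)^m)) :
    ecol s m hs s(w, w + ((4*s+1 : ℕ) : ZMod (2*s*(4*s+1)^m))^i) = colOf s m i w := by
  classical
  have hP : PP s m w (w + ((4*s+1 : ℕ) : ZMod (2*s*(4*s+1)^m))^i) := ⟨i, hi, by ring⟩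
  show gfun s m w (w + _) = _
  unfold gfun
  rw [dif_pos hP]
  congr 1
  have hspec := hP.choose_spec
  exact pow_inj_V hs hspec.1 hi (by linear_combination -hspec.2)

noncomputable def colZ (i : ℕ) (z : ZMod (2*s)) : ℕ :=
  if i < m then i*(2*s) + z.val else m*(2*s) + z.val % s

lemma colOf_eq (i : ℕ) (y : ZMod (2*s*(4*s+1)^m)) :
    colOf s m i y = colZ s m i (ψ s m y) := rfl

def φm : ZMod (2*s) →+* ZMod s :=
  ZMod.castHom (show s ∣ 2*s from ⟨2, by ring⟩) (ZMod s)

lemma val_mod_s (hs : 2 ≤ s) (z : ZMod (2*s)) : z.val % s = (φm s z).val := by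
  haveI : NeZero (2*s) := ⟨by omega⟩
  haveI : NeZero s := ⟨by omega⟩
  rw [φm, ZMod.castHom_apply, ← ZMod.natCast_val, ZMod.val_natCast]

lemma cast_nat_inj {q : ℕ} (_hq : 0 < q) {t1 t2 : ℕ} (h1 : t1 < q) (h2 : t2 < q)
    (h : (t1 : ZMod q) = t2) : t1 = t2 := by
  haveI : NeZero q := ⟨by omega⟩
  have h' := congrArg ZMod.val h
  rwa [ZMod.val_natCast, ZMod.val_natCast, Nat.mod_eq_of_lt h1, Nat.mod_eq_of_lt h2] at h'

lemma eps_cancel {q : ℕ} {ε : ZMod q} (hε : ε = 1 ∨ ε = -1) {x y : ZMod q}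
    (h : x*ε = y*ε) : x = y := by
  rcases hε with rfl | rfl
  · simpa using h
  · simpa using h

lemma nodup_aux (hs : 2 ≤ s) {i : ℕ} (him : i ≤ m) (x0 ε : ZMod (2*s))
    (hε : ε = 1 ∨ ε = -1) (k : ℕ) (hk : k ≤ if i = m then s else 2*s) :
    ((List.range k).map (fun t : ℕ => colZ s m i (x0 + (t : ZMod (2*s))*ε))).Nodup := by
  haveI : NeZero (2*s) := ⟨by omega⟩
  haveI : NeZero s := ⟨by omega⟩
  refine List.Nodup.map_on ?_ List.nodup_range
  intro t1 ht1 t2 ht2 heq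
  rw [List.mem_range] at ht1 ht2
  by_cases hi : i < m
  · have hk2 : k ≤ 2*s := by rw [if_neg (by omega)] at hk; exact hk
    simp only [colZ, if_pos hi] at heq
    have hveq : (x0 + t1*ε).val = (x0 + t2*ε).val := by omega
    have := ZMod.val_injective _ hveq
    have := eps_cancel hε (add_left_cancel this)
    exact cast_nat_inj (by omega) (by omega) (by omega) this
  · have him' : i = m := by omega
    have hk2 : k ≤ s := by rw [if_pos him'] at hk; exact hk
    simp only [colZ, if_neg hi] at heq
    have hveq : (x0 + t1*ε).val % s = (x0 + t2*ε).val % s := by omega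
    rw [val_mod_s s hs, val_mod_s s hs] at hveq
    have h2 := ZMod.val_injective _ hveq
    rw [map_add, map_add, map_mul, map_mul, map_natCast, map_natCast] at h2
    have h3 : (t1 : ZMod s) * (φm s ε) = (t2 : ZMod s) * (φm s ε) := add_left_cancel h2
    have hφε : φm s ε = 1 ∨ φm s ε = -1 := by
      rcases hε with rfl | rfl
      · left; rw [map_one]
      · right; rw [map_neg, map_one]
    have := eps_cancel hφε h3
    exact cast_nat_inj (by omega) (by omega) (by omega) this

lemma colZ_bounds (hs : 2 ≤ s) {i : ℕ} (him : i ≤ m) (z : ZMod (2*s)) :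
    i*(2*s) ≤ colZ s m i z ∧ colZ s m i z < i*(2*s) + 2*s := by
  haveI : NeZero (2*s) := ⟨by omega⟩
  unfold colZ
  split
  · have := ZMod.val_lt z
    omega
  · have hieq : i = m := by omega
    subst hieq
    have h1 : z.val % s < s := Nat.mod_lt _ (by omega)
    omega

lemma chain (hs : 2 ≤ s) (g : ZMod (2*s*(4*s+1)^m))
    (hadj : ∀ w, (recCirc (2*s*(4*s+1)^m) (4*s+1)).Adj w (w + g))
    (F : ZMod (2*s*(4*s+1)^m) → ℕ)
    (hF : ∀ w, ecol s m hs s(w, w + g) = F w) :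
    ∀ (k : ℕ) (u : ZMod (2*s*(4*s+1)^m)),
      ∃ p : (recCirc (2*s*(4*s+1)^m) (4*s+1)).Walk u (u + (k : ZMod (2*s*(4*s+1)^m)) * g),
        p.length = k ∧
        p.edges.map (ecol s m hs)
          = (List.range k).map (fun t : ℕ => F (u + (t : ZMod (2*s*(4*s+1)^m)) * g)) := by
  intro k
  induction k with
  | zero =>
    intro u
    refine ⟨SimpleGraph.Walk.nil.copy rfl (by push_cast; ring), ?_, ?_⟩ <;>
      simp
  | succ k ih =>
    intro u
    obtain ⟨p', hl, he⟩ := ih (u + g)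
    refine ⟨((p'.cons (hadj u)).copy rfl (by push_cast; ring)), ?_, ?_⟩
    · simp [hl]
    · rw [SimpleGraph.Walk.edges_copy, SimpleGraph.Walk.edges_cons, List.map_cons, he,
        List.range_succ_eq_map, List.map_cons, List.map_map]
      congr 1
      · rw [hF u]; congr 1; push_cast; ring
      · apply List.map_congr_left
        intro t _ht
        simp only [Function.comp_apply]
        congr 1
        push_cast; ring

lemma seg (hs : 2 ≤ s) {i : ℕ} (him : i ≤ m) (a : ℤ)
    (ha : a.natAbs ≤ if i = m then s else 2*s) (u : ZMod (2*s*(4*s+1)^m)) :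
    ∃ p : (recCirc (2*s*(4*s+1)^m) (4*s+1)).Walk u
        (u + (a : ZMod (2*s*(4*s+1)^m)) * ((4*s+1:ℕ) : ZMod (2*s*(4*s+1)^m))^i),
      p.length = a.natAbs ∧ (p.edges.map (ecol s m hs)).Nodup ∧
      ∀ x ∈ p.edges.map (ecol s m hs), i*(2*s) ≤ x ∧ x < i*(2*s) + 2*s := by
  set dp := ((4*s+1:ℕ) : ZMod (2*s*(4*s+1)^m))^i with hdp
  set k := a.natAbs with hk
  rcases le_or_gt 0 a with hpos | hneg
  · -- positive direction
    have hak : (a : ZMod (2*s*(4*s+1)^m)) = (k : ZMod (2*s*(4*s+1)^m)) := by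
      have : a = (k : ℤ) := by omega
      rw [this]; push_cast; ring
    obtain ⟨p, hl, he⟩ := chain s m hs dp (fun w => adj_step hs i him w)
      (fun w => colOf s m i w) (fun w => ecol_step s m hs him w) k u
    refine ⟨p.copy rfl (by rw [hak]), by simpa using hl, ?_, ?_⟩
    · rw [SimpleGraph.Walk.edges_copy, he]
      have hrw : ((List.range k).map (fun t : ℕ =>
          colOf s m i (u + (t : ZMod (2*s*(4*s+1)^m)) * dp)))
          = (List.range k).map (fun t : ℕ =>
            colZ s m i (ψ s m u + (t : ZMod (2*s)) * 1)) := by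
        apply List.map_congr_left
        intro t _ht
        rw [colOf_eq]
        congr 1
        simp only [map_add, map_mul, map_natCast, hdp, ψ_pow]
      rw [hrw]
      exact nodup_aux s m hs him _ _ (Or.inl rfl) k (by exact_mod_cast ha)
    · intro x hx
      rw [SimpleGraph.Walk.edges_copy, he] at hx
      simp only [List.mem_map] at hx
      obtain ⟨t, -, rfl⟩ := hx
      rw [colOf_eq]
      exact colZ_bounds s m hs him _
  · -- negative direction
    have hadj' : ∀ w, (recCirc (2*s*(4*s+1)^m) (4*s+1)).Adj w (w + -dp) := by
      intro w
      have h := (adj_step hs i him (w + -dp)).symm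
      rwa [show w + -dp + dp = w by ring] at h
    have hF' : ∀ w, ecol s m hs s(w, w + -dp) = colOf s m i (w + -dp) := by
      intro w
      have h := ecol_step s m hs him (w + -dp)
      rw [show w + -dp + dp = w by ring] at h
      rw [← h, Sym2.eq_swap]
    obtain ⟨p, hl, he⟩ := chain s m hs (-dp) hadj' (fun w => colOf s m i (w + -dp)) hF' k u
    have hak : u + (k : ZMod (2*s*(4*s+1)^m)) * (-dp) = u + (a : ZMod (2*s*(4*s+1)^m)) * dp := by
      have : a = -(k : ℤ) := by omega
      rw [this]; push_cast; ring
    refine ⟨p.copy rfl hak, by simpa using hl, ?_, ?_⟩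
    · rw [SimpleGraph.Walk.edges_copy, he]
      have hrw : ((List.range k).map (fun t : ℕ =>
          colOf s m i ((u + (t : ZMod (2*s*(4*s+1)^m)) * (-dp)) + -dp)))
          = (List.range k).map (fun t : ℕ =>
            colZ s m i ((ψ s m u - 1) + (t : ZMod (2*s)) * (-1))) := by
        apply List.map_congr_left
        intro t _ht
        rw [colOf_eq]
        congr 1
        simp only [map_add, map_mul, map_neg, map_natCast, hdp, ψ_pow]
        ring
      rw [hrw]
      exact nodup_aux s m hs him _ _ (Or.inr rfl) k (by exact_mod_cast ha)
    · intro x hx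
      rw [SimpleGraph.Walk.edges_copy, he] at hx
      simp only [List.mem_map] at hx
      obtain ⟨t, -, rfl⟩ := hx
      rw [colOf_eq]
      exact colZ_bounds s m hs him _

lemma segs (hs : 2 ≤ s) :
    ∀ (L : List ℤ) (i : ℕ), i + L.length = m + 1 →
    (∀ (j : ℕ) (hj : j < L.length), (L[j]'hj).natAbs ≤ if i + j = m then s else 2*s) →
    ∀ u : ZMod (2*s*(4*s+1)^m),
      ∃ p : (recCirc (2*s*(4*s+1)^m) (4*s+1)).Walk u
        (u + ((ofDigs s L : ℤ) : ZMod (2*s*(4*s+1)^m)) * ((4*s+1:ℕ) : ZMod (2*s*(4*s+1)^m))^i),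
        p.length = Wn L ∧ (p.edges.map (ecol s m hs)).Nodup ∧
        ∀ x ∈ p.edges.map (ecol s m hs), i*(2*s) ≤ x := by
  intro L
  induction L with
  | nil =>
    intro i _ _ u
    refine ⟨SimpleGraph.Walk.nil.copy rfl (by simp [ofDigs]), ?_, ?_, ?_⟩ <;> simp [Wn]
  | cons a L ih =>
    intro i hlen hbnd u
    have him : i ≤ m := by simp at hlen; omega
    obtain ⟨p1, hl1, hnd1, hb1⟩ := seg s m hs him a
      (by
        have h := hbnd 0 (by simp)
        rw [List.getElem_cons_zero] at h
        simpa using h) u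
    obtain ⟨p2, hl2, hnd2, hb2⟩ := ih (i+1) (by simp at hlen ⊢; omega)
      (fun j hj => by
        have h := hbnd (j+1) (by simp; omega)
        rw [List.getElem_cons_succ] at h
        have e : i + (j+1) = i + 1 + j := by omega
        rw [e] at h
        exact h)
      (u + ((a : ℤ) : ZMod (2*s*(4*s+1)^m)) * ((4*s+1:ℕ) : ZMod (2*s*(4*s+1)^m))^i)
    refine ⟨(p1.append p2).copy rfl ?_, ?_, ?_, ?_⟩
    · rw [show ofDigs s (a::L) = a + (4*(s:ℤ)+1)*ofDigs s L from rfl]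
      push_cast
      ring
    · rw [SimpleGraph.Walk.length_copy, SimpleGraph.Walk.length_append, hl1, hl2, Wn_cons]
    · rw [SimpleGraph.Walk.edges_copy, SimpleGraph.Walk.edges_append, List.map_append]
      refine List.Nodup.append hnd1 hnd2 ?_
      intro x hx1 hx2
      have h1 := (hb1 x hx1).2
      have h2 := hb2 x hx2
      have e : i*(2*s) + 2*s = (i+1)*(2*s) := by ring
      omega
    · rw [SimpleGraph.Walk.edges_copy, SimpleGraph.Walk.edges_append, List.map_append]
      intro x hx
      rcases List.mem_append.mp hx with h | h
      · exact (hb1 x h).1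
      · have := hb2 x h
        have e : i*(2*s) + 2*s = (i+1)*(2*s) := by ring
        omega

lemma ofDigs_ofFn {s : ℕ} : ∀ (k : ℕ) (f : Fin k → ℤ),
    ofDigs s (List.ofFn f) = ∑ i : Fin k, f i * (4*(s:ℤ)+1)^(i:ℕ) := by
  intro k
  induction k with
  | zero => intro f; simp [ofDigs]
  | succ n ih =>
    intro f
    rw [List.ofFn_succ]
    show f 0 + (4*(s:ℤ)+1) * ofDigs s (List.ofFn (f ∘ Fin.succ)) = _
    rw [ih, Fin.sum_univ_succ, Finset.mul_sum]
    simp only [Function.comp_apply, Fin.val_succ, Fin.val_zero, pow_zero, mul_one]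
    congr 1
    apply Finset.sum_congr rfl
    intro i _
    rw [pow_succ]
    ring

lemma Wn_ofFn {k : ℕ} (f : Fin k → ℤ) :
    Wn (List.ofFn f) = ∑ i : Fin k, (f i).natAbs := by
  simp [Wn, List.map_ofFn, List.sum_ofFn]

lemma natAbs_le_of_abs_le {a : ℤ} {c : ℕ} (h : |a| ≤ (c:ℤ)) : a.natAbs ≤ c := by
  rw [Int.abs_eq_natAbs] at h; exact_mod_cast h

lemma walk_rep {s m : ℕ} (hs : 2 ≤ s) {u v : ZMod (2*s*(4*s+1)^m)}
    (p : (recCirc (2*s*(4*s+1)^m) (4*s+1)).Walk u v) :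
    ∃ n : Fin (m+1) → ℤ,
      (∑ i : Fin (m+1), ((n i : ℤ) : ZMod (2*s*(4*s+1)^m))
          * ((4*s+1:ℕ) : ZMod (2*s*(4*s+1)^m))^(i:ℕ)) = v - u ∧
      ∑ i : Fin (m+1), (n i).natAbs ≤ p.length := by
  induction p with
  | nil => exact ⟨0, by simp, by simp⟩
  | @cons u w v h q ih =>
    obtain ⟨n, hsum, hlen⟩ := ih
    have general : ∀ (i : ℕ), i ≤ m → ∀ ε : ℤ, ε.natAbs = 1 →
        ((ε : ℤ) : ZMod (2*s*(4*s+1)^m)) * ((4*s+1:ℕ) : ZMod (2*s*(4*s+1)^m))^i = w - u →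
        ∃ n : Fin (m+1) → ℤ,
          (∑ j : Fin (m+1), ((n j : ℤ) : ZMod (2*s*(4*s+1)^m))
              * ((4*s+1:ℕ) : ZMod (2*s*(4*s+1)^m))^(j:ℕ)) = v - u ∧
          ∑ j : Fin (m+1), (n j).natAbs ≤ (SimpleGraph.Walk.cons h q).length := by
      intro i hi ε hε hstep
      set idx : Fin (m+1) := ⟨i, by omega⟩ with hidx
      refine ⟨fun j => n j + if j = idx then ε else 0, ?_, ?_⟩
      · have hsplit : (∑ j : Fin (m+1), (((n j + if j = idx then ε else 0) : ℤ) : ZMod (2*s*(4*s+1)^m))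
            * ((4*s+1:ℕ) : ZMod (2*s*(4*s+1)^m))^(j:ℕ))
            = (∑ j : Fin (m+1), ((n j : ℤ) : ZMod (2*s*(4*s+1)^m))
              * ((4*s+1:ℕ) : ZMod (2*s*(4*s+1)^m))^(j:ℕ))
            + (∑ j : Fin (m+1), (((if j = idx then ε else 0) : ℤ) : ZMod (2*s*(4*s+1)^m))
              * ((4*s+1:ℕ) : ZMod (2*s*(4*s+1)^m))^(j:ℕ)) := by
          rw [← Finset.sum_add_distrib]
          apply Finset.sum_congr rfl
          intro j _
          rw [Int.cast_add, add_mul]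
        have hsingle : (∑ j : Fin (m+1), (((if j = idx then ε else 0) : ℤ) : ZMod (2*s*(4*s+1)^m))
            * ((4*s+1:ℕ) : ZMod (2*s*(4*s+1)^m))^(j:ℕ))
            = ((ε : ℤ) : ZMod (2*s*(4*s+1)^m)) * ((4*s+1:ℕ) : ZMod (2*s*(4*s+1)^m))^i := by
          rw [Finset.sum_eq_single idx]
          · rw [if_pos rfl]
          · intro j _ hj
            rw [if_neg hj]
            simp
          · intro hmem
            exact absurd (Finset.mem_univ _) hmem
        rw [hsplit, hsingle, hsum, hstep]
        ring
      · have hpt : ∀ j : Fin (m+1), ((n j + if j = idx then ε else 0)).natAbs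
            ≤ (n j).natAbs + (if j = idx then 1 else 0) := by
          intro j
          rcases eq_or_ne j idx with rfl | hj
          · rw [if_pos rfl, if_pos rfl]
            have := Int.natAbs_add_le (n idx) ε
            omega
          · rw [if_neg hj, if_neg hj, add_zero, add_zero]
        calc ∑ j : Fin (m+1), ((n j + if j = idx then ε else 0)).natAbs
            ≤ ∑ j : Fin (m+1), ((n j).natAbs + if j = idx then 1 else 0) :=
              Finset.sum_le_sum (fun j _ => hpt j)
          _ = (∑ j : Fin (m+1), (n j).natAbs) + ∑ j : Fin (m+1), (if j = idx then 1 else 0) := by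
              rw [Finset.sum_add_distrib]
          _ = (∑ j : Fin (m+1), (n j).natAbs) + 1 := by simp
          _ ≤ (SimpleGraph.Walk.cons h q).length := by
              rw [SimpleGraph.Walk.length_cons]
              omega
    rcases adj_char hs h with ⟨i, hi, hx⟩ | ⟨i, hi, hx⟩
    · exact general i hi 1 rfl (by rw [Int.cast_one]; linear_combination -hx)
    · exact general i hi (-1) (by decide) (by rw [Int.cast_neg, Int.cast_one]; linear_combination hx)

lemma wn_le_walk {s m : ℕ} (hs : 2 ≤ s) {u v : ZMod (2*s*(4*s+1)^m)} (X : ℤ)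
    (hX : ((X : ℤ) : ZMod (2*s*(4*s+1)^m)) = v - u)
    (p : (recCirc (2*s*(4*s+1)^m) (4*s+1)).Walk u v) :
    Wn (digs s m X) ≤ p.length := by
  obtain ⟨n, hsum, hlen⟩ := walk_rep hs p
  have hdvd : (2*(s:ℤ)*(4*s+1)^m) ∣ ofDigs s (List.ofFn n) - X := by
    have hcast : ((ofDigs s (List.ofFn n) - X : ℤ) : ZMod (2*s*(4*s+1)^m)) = 0 := by
      rw [Int.cast_sub, ofDigs_ofFn]
      push_cast
      push_cast at hsum hX
      rw [hsum, hX, sub_self]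
    rw [ZMod.intCast_zmod_eq_zero_iff_dvd] at hcast
    have e : ((2*s*(4*s+1)^m : ℕ) : ℤ) = 2*(s:ℤ)*(4*s+1)^m := by push_cast; ring
    rwa [e] at hcast
  have hmin := min_wn (show 1 ≤ s by omega) m X (List.ofFn n) (by rw [List.length_ofFn]) hdvd
  rw [Wn_ofFn] at hmin
  omega

lemma digs_bound_nat {s m : ℕ} (hs : 2 ≤ s) (X : ℤ) (j : ℕ) (hj : j < (digs s m X).length) :
    ((digs s m X)[j]'hj).natAbs ≤ if 0 + j = m then s else 2*s := by
  have hb := digs_bound (show 1 ≤ s by omega) m X j hj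
  by_cases hjm : j = m
  · rw [if_pos hjm] at hb
    rw [if_pos (by omega)]
    exact natAbs_le_of_abs_le hb
  · rw [if_neg hjm] at hb
    rw [if_neg (by omega)]
    refine natAbs_le_of_abs_le ?_
    have e : ((2*s : ℕ) : ℤ) = 2*(s:ℤ) := by push_cast; ring
    rw [e]; exact hb

lemma dist_walk {s m : ℕ} (hs : 2 ≤ s) (u v : ZMod (2*s*(4*s+1)^m)) :
    ∃ p : (recCirc (2*s*(4*s+1)^m) (4*s+1)).Walk u v,
      p.length = (recCirc (2*s*(4*s+1)^m) (4*s+1)).dist u v ∧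
      (p.edges.map (ecol s m hs)).Nodup := by
  haveI : NeZero (2*s*(4*s+1)^m) := ⟨by have := N_pos (m := m) hs; omega⟩
  set X : ℤ := ((v - u).val : ℤ) with hXdef
  have hX : ((X : ℤ) : ZMod (2*s*(4*s+1)^m)) = v - u := by
    rw [hXdef]
    push_cast
    rw [ZMod.natCast_val, ZMod.cast_id]
  obtain ⟨p0, hl, hnd, -⟩ := segs s m hs (digs s m X) 0 (by simp [digs_length])
    (fun j hj => digs_bound_nat hs X j hj) u
  have hofd : ((ofDigs s (digs s m X) : ℤ) : ZMod (2*s*(4*s+1)^m)) = v - u := by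
    have hdvd := digs_spec (show 1 ≤ s by omega) m X
    have hc : ((X - ofDigs s (digs s m X) : ℤ) : ZMod (2*s*(4*s+1)^m)) = 0 := by
      rw [ZMod.intCast_zmod_eq_zero_iff_dvd]
      have e : ((2*s*(4*s+1)^m : ℕ) : ℤ) = 2*(s:ℤ)*(4*s+1)^m := by push_cast; ring
      rw [e]; exact hdvd
    rw [Int.cast_sub, sub_eq_zero] at hc
    rw [← hc, hX]
  have hend : u + ((ofDigs s (digs s m X) : ℤ) : ZMod (2*s*(4*s+1)^m))
      * ((4*s+1:ℕ) : ZMod (2*s*(4*s+1)^m))^0 = v := by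
    rw [pow_zero, mul_one, hofd]; ring
  have hreach : (recCirc (2*s*(4*s+1)^m) (4*s+1)).Reachable u v := ⟨p0.copy rfl hend⟩
  obtain ⟨q, hq⟩ := hreach.exists_walk_length_eq_dist
  have h1 : Wn (digs s m X) ≤ q.length := wn_le_walk hs X hX q
  have h2 := SimpleGraph.dist_le (p0.copy rfl hend)
  rw [SimpleGraph.Walk.length_copy, hl] at h2
  refine ⟨p0.copy rfl hend, ?_, ?_⟩
  · rw [SimpleGraph.Walk.length_copy, hl]
    omega
  · rw [SimpleGraph.Walk.edges_copy]
    exact hnd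

lemma digs_Xdiam {s : ℕ} (hs : 2 ≤ s) : ∀ m : ℕ,
    digs s m (ofDigs s (List.replicate m (2*(s:ℤ)) ++ [(s:ℤ)]))
      = List.replicate m (2*(s:ℤ)) ++ [(s:ℤ)] := by
  intro m
  induction m with
  | zero =>
    have h0 : ofDigs s (List.replicate 0 (2*(s:ℤ)) ++ [(s:ℤ)]) = (s:ℤ) := by
      simp [ofDigs]
    rw [h0]
    show [balTop s (s:ℤ)] = [(s:ℤ)]
    have h1 : ((s:ℤ) + ((s:ℤ)-1)) % (2*s) = 2*(s:ℤ) - 1 - (s:ℤ) + (s:ℤ) := by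
      have he : ((s:ℤ) + ((s:ℤ)-1)) = 2*(s:ℤ) - 1 := by ring
      rw [he, Int.emod_eq_of_lt (by omega) (by omega)]
      ring
    unfold balTop
    congr 1
    have hs1 : (1:ℤ) ≤ s := by exact_mod_cast (show 1 ≤ s by omega)
    omega
  | succ k ih =>
    have hofd : ofDigs s (List.replicate (k+1) (2*(s:ℤ)) ++ [(s:ℤ)])
        = 2*(s:ℤ) + (4*s+1) * ofDigs s (List.replicate k (2*(s:ℤ)) ++ [(s:ℤ)]) := by
      rw [List.replicate_succ, List.cons_append]
      rfl
    set y := ofDigs s (List.replicate k (2*(s:ℤ)) ++ [(s:ℤ)]) with hy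
    rw [hofd]
    have hbal : bal s (2*(s:ℤ) + (4*s+1)*y) = 2*(s:ℤ) := by
      unfold bal
      have e1 : (2*(s:ℤ) + (4*s+1)*y + 2*s) = 4*(s:ℤ) + (4*s+1)*y := by ring
      rw [e1, Int.add_mul_emod_self_left, Int.emod_eq_of_lt (by omega) (by omega)]
      ring
    have hdiv : (2*(s:ℤ) + (4*s+1)*y - bal s (2*(s:ℤ) + (4*s+1)*y)) / (4*s+1) = y := by
      rw [hbal]
      have e2 : 2*(s:ℤ) + (4*s+1)*y - 2*s = (4*s+1)*y := by ring
      rw [e2, Int.mul_ediv_cancel_left _ (by positivity)]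
    show bal s (2*(s:ℤ) + (4*s+1)*y) :: digs s k
        ((2*(s:ℤ) + (4*s+1)*y - bal s (2*(s:ℤ) + (4*s+1)*y)) / (4*s+1))
      = List.replicate (k+1) (2*(s:ℤ)) ++ [(s:ℤ)]
    rw [hdiv, hbal, ih, List.replicate_succ, List.cons_append]

lemma Wn_Xdiam {s : ℕ} (m : ℕ) :
    Wn (List.replicate m (2*(s:ℤ)) ++ [(s:ℤ)]) = m*(2*s) + s := by
  induction m with
  | zero => simp [Wn]
  | succ k ih =>
    rw [List.replicate_succ, List.cons_append, Wn_cons, ih]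
    have : (2*(s:ℤ)).natAbs = 2*s := by
      rw [Int.natAbs_mul]
      simp
    rw [this]
    ring

lemma lower_bound {s m : ℕ} (hs : 2 ≤ s) (k : ℕ)
    (h : RainbowConnected (recCirc (2*s*(4*s+1)^m) (4*s+1)) k) :
    2*s*m + s ≤ k := by
  obtain ⟨c, hc, hp⟩ := h
  set X : ℤ := ofDigs s (List.replicate m (2*(s:ℤ)) ++ [(s:ℤ)]) with hXdef
  obtain ⟨p, hpath, hnd⟩ := hp 0 ((X : ℤ) : ZMod (2*s*(4*s+1)^m))
  -- length lower bound
  have hX : ((X : ℤ) : ZMod (2*s*(4*s+1)^m)) = ((X : ℤ) : ZMod (2*s*(4*s+1)^m)) - 0 := by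
    ring
  have h1 : Wn (digs s m X) ≤ p.length := wn_le_walk hs X hX p
  have hdg : Wn (digs s m X) = m*(2*s) + s := by
    rw [hXdef, digs_Xdiam hs m, Wn_Xdiam]
  rw [hdg] at h1
  -- length upper bound from colors
  have h2 : p.length ≤ k := by
    have hnodup : (p.edges.map c).Nodup := hnd
    have hsub : (p.edges.map c).toFinset ⊆ Finset.range k := by
      intro x hx
      rw [List.mem_toFinset] at hx
      rw [List.mem_map] at hx
      obtain ⟨e, he, rfl⟩ := hx
      rw [Finset.mem_range]
      exact hc e (SimpleGraph.Walk.edges_subset_edgeSet p he)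
    have hcard := Finset.card_le_card hsub
    rw [Finset.card_range, List.toFinset_card_of_nodup hnodup, List.length_map,
      SimpleGraph.Walk.length_edges] at hcard
    exact hcard
  have e3 : m*(2*s) = 2*s*m := by ring
  omega

lemma src_mem {s m : ℕ} (hs : 2 ≤ s) :
    StrongRainbowConnected (recCirc (2*s*(4*s+1)^m) (4*s+1)) (2*s*m + s) := by
  refine ⟨ecol s m hs, fun e _ => ecol_lt s m hs e, fun u v => ?_⟩
  obtain ⟨p, hl, hnd⟩ := dist_walk hs u v
  exact ⟨p, p.isPath_of_length_eq_dist hl, hl, hnd⟩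

end RCD

/-- For d = 2r+1 with r ≥ 4 even: rc(G(rd^m,d)) = src(G(rd^m,d)) = r·m + r/2. -/
theorem rc_src_recCirc_odd (r m : ℕ) (hr : 4 ≤ r) (hre : Even r) (hm : 1 ≤ m) :
    rc (recCirc (r * (2 * r + 1) ^ m) (2 * r + 1)) = r * m + r / 2 ∧
    src (recCirc (r * (2 * r + 1) ^ m) (2 * r + 1)) = r * m + r / 2 := by
  obtain ⟨s, rfl⟩ := hre
  have hs : 2 ≤ s := by omega
  have e2 : 2*(s+s)+1 = 4*s+1 := by ring
  rw [e2]
  have e1 : (s+s)*(4*s+1)^m = 2*s*(4*s+1)^m := by ring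
  rw [e1]
  have e3 : (s+s)*m + (s+s)/2 = 2*s*m + s := by
    have h4 : (s+s)*m = 2*s*m := by ring
    have h5 : (s+s)/2 = s := by omega
    rw [h4, h5]
  rw [e3]
  set G := recCirc (2*s*(4*s+1)^m) (4*s+1) with hG
  have hmemB : StrongRainbowConnected G (2*s*m+s) := RCD.src_mem hs
  have hBA : ∀ k, StrongRainbowConnected G k → RainbowConnected G k := by
    rintro k ⟨c, hc, hp⟩
    exact ⟨c, hc, fun u v => by obtain ⟨p, h1, _, h3⟩ := hp u v; exact ⟨p, h1, h3⟩⟩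
  have hlow : ∀ k, RainbowConnected G k → 2*s*m + s ≤ k := fun k hk =>
    RCD.lower_bound hs k hk
  constructor
  · apply le_antisymm
    · exact Nat.sInf_le (hBA _ hmemB)
    · exact hlow _ (Nat.sInf_mem (s := {k | RainbowConnected G k}) ⟨_, hBA _ hmemB⟩)
  · apply le_antisymm
    · exact Nat.sInf_le hmemB
    · exact hlow _ (hBA _ (Nat.sInf_mem (s := {k | StrongRainbowConnected G k}) ⟨_, hmemB⟩))
end

section
/- Let P = b₁,...,b_t be a shortest path from 0 to v in G(rd^m,d), written as a sequence of steps each equal to +d^j or −d^j. Then P does not contain both a step +d^j and a step −d^j for any j, and for each j, P contains fewer than d steps equal to +d^j and fewer than d steps equal to −d^j. -/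
section Aux

variable (r d m : ℕ)

local notation "N" => r * d ^ m

lemma aux_pow_ne (hr : 1 ≤ r) (hrd : r < d) (hm : 1 ≤ m) {j : ℕ}
    (hj : j < Nat.clog d N) : ((d : ZMod N)) ^ j ≠ 0 := by
  have hd : 1 < d := lt_of_le_of_lt hr hrd
  have hN : 1 < N := by
    have : d ≤ d ^ m := Nat.le_self_pow (by omega) d
    calc 1 < 1 * d := by omega
    _ ≤ r * d ^ m := Nat.mul_le_mul hr this
  haveI : NeZero (r * d ^ m) := ⟨by omega⟩
  have hlt : d ^ j < N := by
    have h1 : j ≤ Nat.clog d N - 1 := by omega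
    calc d ^ j ≤ d ^ (Nat.clog d N - 1) := Nat.pow_le_pow_right (by omega) h1
    _ < N := Nat.pow_pred_clog_lt_self hd hN
  have hnd : ¬ (N ∣ d ^ j) := by
    intro h
    have := Nat.le_of_dvd (pow_pos (by omega) j) h
    omega
  have hcast : ((d : ZMod N)) ^ j = ((d ^ j : ℕ) : ZMod N) := by push_cast; ring
  rw [hcast, Ne, ZMod.natCast_eq_zero_iff]
  exact hnd

lemma aux_adj (hr : 1 ≤ r) (hrd : r < d) (hm : 1 ≤ m) {j : ℕ}
    (hj : j < Nat.clog d N) (b : Bool) (a : ZMod N) :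
    (recCirc N d).Adj a (a + stepVal N d (j, b)) := by
  have hne := aux_pow_ne r d m hr hrd hm hj
  rw [recCirc, SimpleGraph.circulantGraph, SimpleGraph.fromRel_adj]
  constructor
  · intro h
    have : stepVal N d (j, b) = 0 := by
      have := congrArg (· - a) h
      simpa using this.symm
    cases b <;> simp [stepVal] at this <;> exact hne this
  · cases b
    · left
      refine ⟨j, hj, ?_⟩
      simp [stepVal]
    · right
      refine ⟨j, hj, ?_⟩
      simp [stepVal]

lemma aux_walk (hr : 1 ≤ r) (hrd : r < d) (hm : 1 ≤ m) (L : List (ℕ × Bool))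
    (hsteps : ∀ p ∈ L, p.1 < Nat.clog d N) (a : ZMod N) :
    ∃ w : (recCirc N d).Walk a (a + (L.map (stepVal N d)).sum), w.length = L.length := by
  induction L generalizing a with
  | nil =>
    refine ⟨(SimpleGraph.Walk.nil : (recCirc N d).Walk a a).copy rfl (by simp), ?_⟩
    rw [SimpleGraph.Walk.length_copy]
    simp
  | cons p T ih =>
    obtain ⟨j, b⟩ := p
    have hj : j < Nat.clog d N := hsteps (j, b) (by simp)
    obtain ⟨w, hw⟩ := ih (fun q hq => hsteps q (by simp [hq])) (a + stepVal N d (j, b))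
    refine ⟨(SimpleGraph.Walk.cons (aux_adj r d m hr hrd hm hj b a) w).copy rfl (by simp; ring), ?_⟩
    rw [SimpleGraph.Walk.length_copy, SimpleGraph.Walk.length_cons, hw]
    simp

lemma aux_dist_le (hr : 1 ≤ r) (hrd : r < d) (hm : 1 ≤ m) (L : List (ℕ × Bool))
    (hsteps : ∀ p ∈ L, p.1 < Nat.clog d N) :
    (recCirc N d).dist 0 ((L.map (stepVal N d)).sum) ≤ L.length := by
  obtain ⟨w, hw⟩ := aux_walk r d m hr hrd hm L hsteps 0
  calc (recCirc N d).dist 0 ((L.map (stepVal N d)).sum)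
      ≤ (w.copy rfl (by simp)).length := SimpleGraph.dist_le _
    _ = L.length := by rw [SimpleGraph.Walk.length_copy, hw]

lemma aux_replace (hr : 1 ≤ r) (hrd : r < d) (hm : 1 ≤ m) {j : ℕ}
    (hj : j < Nat.clog d N) (b : Bool) :
    ∃ M : List (ℕ × Bool), (∀ p ∈ M, p.1 < Nat.clog d N) ∧
      (M.map (stepVal N d)).sum = d • stepVal N d (j, b) ∧ M.length < d := by
  have hd : 1 < d := lt_of_le_of_lt hr hrd
  have hN : 1 < N := by
    have : d ≤ d ^ m := Nat.le_self_pow (by omega) d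
    calc 1 < 1 * d := by omega
    _ ≤ r * d ^ m := Nat.mul_le_mul hr this
  haveI : NeZero (r * d ^ m) := ⟨by omega⟩
  have hscalar : ∃ k, k < d ∧ ∃ j', j' < Nat.clog d N ∧
      (k : ZMod N) * (d : ZMod N) ^ j' = (d : ZMod N) * (d : ZMod N) ^ j := by
    by_cases hjc : j + 1 < Nat.clog d N
    · exact ⟨1, by omega, j + 1, hjc, by push_cast; ring⟩
    · have hjeq : Nat.clog d N = j + 1 := by omega
      rcases Nat.lt_or_ge r 2 with hr2 | hr2
      · -- r = 1
        have hclog : Nat.clog d N = m := by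
          have hr1 : r = 1 := by omega
          rw [hr1, one_mul]
          exact Nat.clog_pow d m hd
        have hjm : j + 1 = m := by omega
        refine ⟨0, by omega, 0, by omega, ?_⟩
        have h0 : ((d : ZMod N)) * ((d : ZMod N)) ^ j = 0 := by
          have hcast : ((d : ZMod N)) * ((d : ZMod N)) ^ j = ((d ^ (j+1) : ℕ) : ZMod N) := by
            push_cast; ring
          rw [hcast, ZMod.natCast_eq_zero_iff, hjm]
          have hr1 : r = 1 := by omega
          exact ⟨1, by rw [hr1]; ring⟩
        rw [h0]
        simp
      · -- r ≥ 2
        have hclog : Nat.clog d N = m + 1 := by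
          have h1 : Nat.clog d N ≤ m + 1 := by
            rw [Nat.clog_le_iff_le_pow hd]
            calc r * d ^ m ≤ d * d ^ m := Nat.mul_le_mul_right _ (by omega)
            _ = d ^ (m + 1) := by ring
          have h2 : m < Nat.clog d N := by
            rw [Nat.lt_clog_iff_pow_lt hd]
            have hpos : 0 < d ^ m := pow_pos (by omega) m
            calc d ^ m = 1 * d ^ m := (one_mul _).symm
            _ < r * d ^ m := (Nat.mul_lt_mul_right hpos).mpr (by omega)
          omega
        have hjm : j = m := by omega
        refine ⟨d % r, ?_, m, by omega, ?_⟩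
        · have := Nat.mod_lt d (show 0 < r by omega)
          omega
        · rw [hjm]
          have hmodeq : (d % r * d ^ m : ℕ) ≡ (d * d ^ m : ℕ) [MOD N] := by
            have hle : d % r * d ^ m ≤ d * d ^ m :=
              Nat.mul_le_mul_right _ (by have := Nat.mod_lt d (show 0 < r by omega); omega)
            rw [Nat.modEq_iff_dvd' hle]
            have hsub : d * d ^ m - d % r * d ^ m = (r * (d / r)) * d ^ m := by
              rw [← Nat.sub_mul]
              congr 1
              have := Nat.div_add_mod d r
              omega
            rw [hsub]
            exact ⟨d / r, by ring⟩
          have hcc := (ZMod.natCast_eq_natCast_iff _ _ _).mpr hmodeq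
          calc ((d % r : ℕ) : ZMod N) * (d : ZMod N) ^ m
              = ((d % r * d ^ m : ℕ) : ZMod N) := by push_cast; ring
            _ = ((d * d ^ m : ℕ) : ZMod N) := hcc
            _ = (d : ZMod N) * (d : ZMod N) ^ m := by push_cast; ring
  obtain ⟨k, hk, j', hj', hkey⟩ := hscalar
  refine ⟨List.replicate k (j', b), ?_, ?_, by simpa using hk⟩
  · intro p hp
    rw [List.mem_replicate] at hp
    rw [hp.2]
    exact hj'
  · rw [List.map_replicate, List.sum_replicate, nsmul_eq_mul, nsmul_eq_mul]
    cases b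
    · simp only [stepVal]
      rw [if_neg (by simp), if_neg (by simp), mul_neg, mul_neg, hkey]
    · simp only [stepVal]
      rw [if_pos trivial, if_pos trivial, hkey]

end Aux

/-- Any shortest path from 0 to v in G(rd^m,d) uses no cancelling pair ±d^j and
fewer than d steps of each sign ±d^j. -/
theorem shortest_path_steps_basic (r d m : ℕ) (hr : 1 ≤ r) (hrd : r < d) (hm : 1 ≤ m)
    (v : ZMod (r * d ^ m)) (L : List (ℕ × Bool))
    (hsteps : ∀ p ∈ L, p.1 < Nat.clog d (r * d ^ m))
    (hsum : (L.map (stepVal (r * d ^ m) d)).sum = v)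
    (hlen : L.length = (recCirc (r * d ^ m) d).dist 0 v) :
    (∀ j, ¬((j, true) ∈ L ∧ (j, false) ∈ L)) ∧
    (∀ j, L.count (j, true) < d ∧ L.count (j, false) < d) := by
  have hd : 1 < d := lt_of_le_of_lt hr hrd
  have key : ∀ L' : List (ℕ × Bool), (∀ p ∈ L', p.1 < Nat.clog d (r * d ^ m)) →
      (L'.map (stepVal (r * d ^ m) d)).sum = v → L.length ≤ L'.length := by
    intro L' hst hsm
    rw [hlen, ← hsm]
    exact aux_dist_le r d m hr hrd hm L' hst
  constructor
  · rintro j ⟨ht, hf⟩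
    obtain ⟨L1, hperm1⟩ : ∃ L1, L.Perm ((j, true) :: L1) :=
      ⟨_, List.perm_cons_erase ht⟩
    have hf1 : (j, false) ∈ L1 := by
      have hmem := hperm1.mem_iff.mp hf
      simpa using hmem
    obtain ⟨L2, hperm2⟩ : ∃ L2, L1.Perm ((j, false) :: L2) :=
      ⟨_, List.perm_cons_erase hf1⟩
    have hperm : L.Perm ((j, true) :: (j, false) :: L2) := hperm1.trans (hperm2.cons _)
    have hsm' : (L2.map (stepVal (r * d ^ m) d)).sum = v := by
      have hs := (hperm.map (stepVal (r * d ^ m) d)).sum_eq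
      rw [hsum] at hs
      have hz : stepVal (r * d ^ m) d (j, true) + stepVal (r * d ^ m) d (j, false) = 0 := by
        simp [stepVal]
      simp only [List.map_cons, List.sum_cons] at hs
      rw [← add_assoc, hz, zero_add] at hs
      exact hs.symm
    have hst' : ∀ p ∈ L2, p.1 < Nat.clog d (r * d ^ m) := by
      intro p hp
      exact hsteps p (hperm.mem_iff.mpr (by simp [hp]))
    have hlen' : L.length = L2.length + 2 := by
      have := hperm.length_eq
      simpa using this
    have := key _ hst' hsm'
    omega
  · intro j
    have main : ∀ b : Bool, L.count (j, b) < d := by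
      intro b
      by_contra hcnt
      push_neg at hcnt
      have hmem : (j, b) ∈ L := List.count_pos_iff.mp (by omega)
      have hj : j < Nat.clog d (r * d ^ m) := hsteps (j, b) hmem
      obtain ⟨M, hMst, hMsum, hMlen⟩ := aux_replace r d m hr hrd hm hj b
      have hperm : (List.replicate (L.count (j, b)) (j, b) ++
          L.filter (fun p => !(p == (j, b)))).Perm L := by
        rw [← List.filter_beq (l := L) (j, b)]
        exact L.filter_append_perm _
      set cnt := L.count (j, b) with hcntdef
      set rest := L.filter (fun p => !(p == (j, b))) with hrestdef
      set L' := List.replicate (cnt - d) (j, b) ++ M ++ rest with hL'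
      have hsm' : (L'.map (stepVal (r * d ^ m) d)).sum = v := by
        have hLsum : (L.map (stepVal (r * d ^ m) d)).sum =
            cnt • stepVal (r * d ^ m) d (j, b) + (rest.map (stepVal (r * d ^ m) d)).sum := by
          rw [← (hperm.map (stepVal (r * d ^ m) d)).sum_eq]
          simp [List.sum_replicate]
        have h1 : (L'.map (stepVal (r * d ^ m) d)).sum =
            (cnt - d) • stepVal (r * d ^ m) d (j, b) + d • stepVal (r * d ^ m) d (j, b)
              + (rest.map (stepVal (r * d ^ m) d)).sum := by
          simp only [hL', List.map_append, List.sum_append, List.map_replicate,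
            List.sum_replicate, hMsum]
        rw [h1, ← add_nsmul]
        have h2 : cnt - d + d = cnt := by omega
        rw [h2, ← hLsum, hsum]
      have hst' : ∀ p ∈ L', p.1 < Nat.clog d (r * d ^ m) := by
        intro p hp
        simp only [hL', List.mem_append] at hp
        rcases hp with (hp | hp) | hp
        · rw [List.mem_replicate] at hp
          rw [hp.2]; exact hj
        · exact hMst p hp
        · exact hsteps p (List.mem_of_mem_filter hp)
      have hlenL : L.length = cnt + rest.length := by
        have := hperm.length_eq
        simpa using this.symm
      have hlenL' : L'.length = (cnt - d) + M.length + rest.length := by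
        simp only [hL', List.length_append, List.length_replicate]
      have := key L' hst' hsm'
      omega
    exact ⟨main true, main false⟩
end
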